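/- arXiv:2008.03953 — 13 statements merged into one kernel-verified Lean document; each statement's English description precedes it below -/
import Mathlib

section
/- Let p be a prime, m ≥ 1, K = F_{p^m}, and let f : K → K be a quadratic function (with zero constant term). Then for every c ∈ K with c^p = c and c ≠ 1 (i.e., c in the prime field, c ≠ 1) and for all x, γ ∈ K, the identity f(x+γ) − c·f(x) = (1−c)·f(x + (1−c)⁻¹·γ) + f(γ) − (1−c)·f((1−c)⁻¹·γ) holds. -/
/-- For a quadratic function `f` over `K = F_{p^m}` and `c` in the prime
field with `c ≠ 1`, the `c`-derivative identity
`f(x+γ) − c·f(x) = (1−c)·f(x + (1−c)⁻¹·γ) + f(γ) − (1−c)·f((1−c)⁻¹·γ)` holds. -/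
theorem stmt_0 (p m : ℕ) (hp : p.Prime) (hm : 1 ≤ m)
    (K : Type*) [Field K] [Fintype K] (hK : Fintype.card K = p ^ m)
    (f : K → K)
    (hf : ∃ (a : Fin m × Fin m → K) (b : Fin m → K), ∀ x : K,
      f x = (∑ ij : Fin m × Fin m, a ij * x ^ (p ^ (ij.1 : ℕ) + p ^ (ij.2 : ℕ)))
        + ∑ i : Fin m, b i * x ^ p ^ (i : ℕ))
    (c : K) (hc : c ^ p = c) (hc1 : c ≠ 1) (x γ : K) :
    f (x + γ) - c * f x
      = (1 - c) * f (x + (1 - c)⁻¹ * γ) + f γ - (1 - c) * f ((1 - c)⁻¹ * γ) := by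
  obtain ⟨a, b, hab⟩ := hf
  haveI := Fact.mk hp
  haveI : CharP K p := by
    obtain ⟨n, hn, hcard⟩ := FiniteField.card K (ringChar K)
    have h1 : ringChar K ∣ p ^ m := by rw [← hK, hcard]; exact dvd_pow_self _ n.2.ne'
    have : ringChar K = p := (Nat.prime_dvd_prime_iff_eq hn hp).mp (hn.dvd_of_dvd_pow h1)
    rw [← this]; exact ringChar.charP K
  set d : K := (1 - c)⁻¹ with hdval
  have h1c : (1 : K) - c ≠ 0 := sub_ne_zero.mpr fun h => hc1 h.symm
  have hd : (1 - c) * d = 1 := mul_inv_cancel₀ h1c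
  have hcpow : ∀ k : ℕ, c ^ p ^ k = c := by
    intro k; induction k with
    | zero => simp
    | succ k ih => rw [pow_succ, pow_mul, ih, hc]
  have hdp : d ^ p = d := by rw [hdval, inv_pow, sub_pow_char, one_pow, hc]
  have hdpow : ∀ k : ℕ, d ^ p ^ k = d := by
    intro k; induction k with
    | zero => simp
    | succ k ih => rw [pow_succ, pow_mul, ih, hdp]
  have frob : ∀ (k : ℕ) (z w : K), (z + w) ^ p ^ k = z ^ p ^ k + w ^ p ^ k :=
    fun k z w => add_pow_char_pow z w p k
  have quad : ∀ i j : Fin m,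
      (x + γ) ^ (p ^ (i : ℕ) + p ^ (j : ℕ)) - c * x ^ (p ^ (i : ℕ) + p ^ (j : ℕ))
        = (1 - c) * (x + d * γ) ^ (p ^ (i : ℕ) + p ^ (j : ℕ))
          + γ ^ (p ^ (i : ℕ) + p ^ (j : ℕ))
          - (1 - c) * (d * γ) ^ (p ^ (i : ℕ) + p ^ (j : ℕ)) := by
    intro i j
    have e1 : (x + γ) ^ (p ^ (i : ℕ) + p ^ (j : ℕ))
        = (x ^ p ^ (i : ℕ) + γ ^ p ^ (i : ℕ)) * (x ^ p ^ (j : ℕ) + γ ^ p ^ (j : ℕ)) := by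
      rw [pow_add, frob, frob]
    have e2 : (x + d * γ) ^ (p ^ (i : ℕ) + p ^ (j : ℕ))
        = (x ^ p ^ (i : ℕ) + d * γ ^ p ^ (i : ℕ)) * (x ^ p ^ (j : ℕ) + d * γ ^ p ^ (j : ℕ)) := by
      rw [pow_add, frob, frob, mul_pow, mul_pow, hdpow, hdpow]
    have e3 : (d * γ) ^ (p ^ (i : ℕ) + p ^ (j : ℕ))
        = (d * γ ^ p ^ (i : ℕ)) * (d * γ ^ p ^ (j : ℕ)) := by
      rw [pow_add, mul_pow, mul_pow, hdpow, hdpow]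
    have e4 : γ ^ (p ^ (i : ℕ) + p ^ (j : ℕ)) = γ ^ p ^ (i : ℕ) * γ ^ p ^ (j : ℕ) := pow_add γ _ _
    rw [e1, e2, e3, e4]
    linear_combination -(x ^ p ^ (i : ℕ) * γ ^ p ^ (j : ℕ)
      + x ^ p ^ (j : ℕ) * γ ^ p ^ (i : ℕ)) * hd
  have lin : ∀ i : Fin m,
      (x + γ) ^ p ^ (i : ℕ) - c * x ^ p ^ (i : ℕ)
        = (1 - c) * (x + d * γ) ^ p ^ (i : ℕ) + γ ^ p ^ (i : ℕ)
          - (1 - c) * (d * γ) ^ p ^ (i : ℕ) := by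
    intro i
    have e1 : (x + γ) ^ p ^ (i : ℕ) = x ^ p ^ (i : ℕ) + γ ^ p ^ (i : ℕ) := frob _ _ _
    have e2 : (x + d * γ) ^ p ^ (i : ℕ) = x ^ p ^ (i : ℕ) + d * γ ^ p ^ (i : ℕ) := by
      rw [frob, mul_pow, hdpow]
    have e3 : (d * γ) ^ p ^ (i : ℕ) = d * γ ^ p ^ (i : ℕ) := by rw [mul_pow, hdpow]
    rw [e1, e2, e3]
    ring
  have hA : (∑ ij : Fin m × Fin m, a ij * (x + γ) ^ (p ^ (ij.1 : ℕ) + p ^ (ij.2 : ℕ)))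
      - c * ∑ ij : Fin m × Fin m, a ij * x ^ (p ^ (ij.1 : ℕ) + p ^ (ij.2 : ℕ))
      = (1 - c) * (∑ ij : Fin m × Fin m,
          a ij * (x + d * γ) ^ (p ^ (ij.1 : ℕ) + p ^ (ij.2 : ℕ)))
        + (∑ ij : Fin m × Fin m, a ij * γ ^ (p ^ (ij.1 : ℕ) + p ^ (ij.2 : ℕ)))
        - (1 - c) * ∑ ij : Fin m × Fin m,
            a ij * (d * γ) ^ (p ^ (ij.1 : ℕ) + p ^ (ij.2 : ℕ)) := by
    simp only [Finset.mul_sum, ← Finset.sum_sub_distrib, ← Finset.sum_add_distrib]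
    refine Finset.sum_congr rfl fun ij _ => ?_
    linear_combination a ij * quad ij.1 ij.2
  have hB : (∑ i : Fin m, b i * (x + γ) ^ p ^ (i : ℕ))
      - c * ∑ i : Fin m, b i * x ^ p ^ (i : ℕ)
      = (1 - c) * (∑ i : Fin m, b i * (x + d * γ) ^ p ^ (i : ℕ))
        + (∑ i : Fin m, b i * γ ^ p ^ (i : ℕ))
        - (1 - c) * ∑ i : Fin m, b i * (d * γ) ^ p ^ (i : ℕ) := by
    simp only [Finset.mul_sum, ← Finset.sum_sub_distrib, ← Finset.sum_add_distrib]
    refine Finset.sum_congr rfl fun i _ => ?_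
    linear_combination b i * lin i
  rw [hab, hab, hab, hab, hab]
  linear_combination hA + hB
end

section
/- Let p be a prime, m ≥ 1, K = F_{p^m}, c ∈ K with c^p = c and c ≠ 1, and let f : K → K be a quadratic function (with zero constant term). If every b ∈ K has at most two preimages under f (in particular, if f is 2-to-1), then f is APcN with respect to c: for all a, b ∈ K, the equation f(x+a) − c·f(x) = b has at most two solutions x ∈ K. -/
/-- A quadratic function over `F_{p^m}` in which every element has at most
two preimages is APcN for every `c` in the prime field with `c ≠ 1`. -/
theorem stmt_1 (p m : ℕ) (hp : p.Prime) (hm : 1 ≤ m)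
    (K : Type*) [Field K] [Fintype K] (hK : Fintype.card K = p ^ m)
    (f : K → K)
    (hf : ∃ (a : Fin m × Fin m → K) (b : Fin m → K), ∀ x : K,
      f x = (∑ ij : Fin m × Fin m, a ij * x ^ (p ^ (ij.1 : ℕ) + p ^ (ij.2 : ℕ)))
        + ∑ i : Fin m, b i * x ^ p ^ (i : ℕ))
    (c : K) (hc : c ^ p = c) (hc1 : c ≠ 1)
    (h2to1 : ∀ b : K, {x : K | f x = b}.ncard ≤ 2) :
    ∀ a b : K, {x : K | f (x + a) - c * f x = b}.ncard ≤ 2 := by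
  intro a b
  obtain ⟨co, li, hfc⟩ := hf
  haveI : Fact p.Prime := ⟨hp⟩
  haveI hcharP : CharP K p := by
    refine (CharP.charP_iff_prime_eq_zero hp).2 ?_
    have h0 : ((Fintype.card K : ℕ) : K) = 0 := Nat.cast_card_eq_zero K
    rw [hK] at h0
    push_cast at h0
    exact pow_eq_zero_iff (by omega) |>.mp h0
  set d : K := 1 - c with hd_def
  have hd : d ≠ 0 := sub_ne_zero.mpr (Ne.symm hc1)
  have hdp : d ^ p = d := by
    rw [hd_def, sub_pow_char, one_pow, hc]
  have hdpn : ∀ n : ℕ, d ^ p ^ n = d := by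
    intro n
    induction n with
    | zero => simp
    | succ n ih => rw [pow_succ, pow_mul, ih, hdp]
  set e : K := a * d⁻¹ with he_def
  have hepn : ∀ n : ℕ, e ^ p ^ n = a ^ p ^ n * d⁻¹ := by
    intro n
    rw [he_def, mul_pow, inv_pow, hdpn]
  -- key identity
  have key : ∀ x : K, f (x + a) - c * f x = d * f (x + e) + (f a - d * f e) := by
    intro x
    have hc_eq : c = 1 - d := by rw [hd_def]; ring
    rw [hfc (x + a), hfc x, hfc (x + e), hfc a, hfc e]
    have h1 : (∑ ij : Fin m × Fin m, co ij * (x + a) ^ (p ^ (ij.1 : ℕ) + p ^ (ij.2 : ℕ)))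
        - c * ∑ ij : Fin m × Fin m, co ij * x ^ (p ^ (ij.1 : ℕ) + p ^ (ij.2 : ℕ))
        = d * (∑ ij : Fin m × Fin m, co ij * (x + e) ^ (p ^ (ij.1 : ℕ) + p ^ (ij.2 : ℕ)))
          + ((∑ ij : Fin m × Fin m, co ij * a ^ (p ^ (ij.1 : ℕ) + p ^ (ij.2 : ℕ)))
            - d * ∑ ij : Fin m × Fin m, co ij * e ^ (p ^ (ij.1 : ℕ) + p ^ (ij.2 : ℕ))) := by
      rw [Finset.mul_sum, Finset.mul_sum, Finset.mul_sum, ← Finset.sum_sub_distrib,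
        ← Finset.sum_sub_distrib, ← Finset.sum_add_distrib]
      refine Finset.sum_congr rfl fun ij _ => ?_
      rw [pow_add, pow_add, pow_add, pow_add, pow_add, add_pow_char_pow, add_pow_char_pow,
        add_pow_char_pow, add_pow_char_pow, hepn, hepn, hc_eq]
      field_simp
      ring
    have h2 : (∑ i : Fin m, li i * (x + a) ^ p ^ (i : ℕ))
        - c * ∑ i : Fin m, li i * x ^ p ^ (i : ℕ)
        = d * (∑ i : Fin m, li i * (x + e) ^ p ^ (i : ℕ))
          + ((∑ i : Fin m, li i * a ^ p ^ (i : ℕ))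
            - d * ∑ i : Fin m, li i * e ^ p ^ (i : ℕ)) := by
      rw [Finset.mul_sum, Finset.mul_sum, Finset.mul_sum, ← Finset.sum_sub_distrib,
        ← Finset.sum_sub_distrib, ← Finset.sum_add_distrib]
      refine Finset.sum_congr rfl fun i _ => ?_
      rw [add_pow_char_pow, add_pow_char_pow, hepn, hc_eq]
      field_simp
      ring
    linear_combination h1 + h2
  set t : K := (b - (f a - d * f e)) * d⁻¹ with ht_def
  have hset : {x : K | f (x + a) - c * f x = b} = (fun y => y - e) '' {y : K | f y = t} := by
    ext x
    simp only [Set.mem_setOf_eq, Set.mem_image]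
    constructor
    · intro hx
      refine ⟨x + e, ?_, by ring⟩
      rw [key x] at hx
      rw [ht_def]
      field_simp
      linear_combination hx
    · rintro ⟨y, hy, rfl⟩
      rw [key, show y - e + e = y by ring, hy, ht_def]
      field_simp
      ring
  rw [hset, Set.ncard_image_of_injective _ (fun u v h => by simpa using h)]
  exact h2to1 t
end

section
/- Let p be an odd prime, m ≥ 1, K = F_{p^m}, and c ∈ K with c^p = c and c ≠ 1. Let f : K → K be a Dembowski–Ostrom polynomial, i.e. f(x) = Σ_{0≤i≤j≤m−1} a_{ij}·x^{p^i+p^j} for some a_{ij} ∈ K. Then f is APcN with respect to c (for all a, b ∈ K the equation f(x+a) − c·f(x) = b has at most two solutions) if and only if f is planar (for every a ∈ K, a ≠ 0, the map x ↦ f(x+a) − f(x) is a bijection of K). -/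
/-- For `p` odd, a Dembowski–Ostrom polynomial over `F_{p^m}` is APcN
(with respect to any prime-field `c ≠ 1`) if and only if it is planar. -/
theorem stmt_2 (p m : ℕ) (hp : p.Prime) (hodd : Odd p) (hm : 1 ≤ m)
    (K : Type*) [Field K] [Fintype K] (hK : Fintype.card K = p ^ m)
    (f : K → K)
    (hf : ∃ a : Fin m → Fin m → K, ∀ x : K,
      f x = ∑ i : Fin m, ∑ j : Fin m,
        if (i : ℕ) ≤ (j : ℕ) then a i j * x ^ (p ^ (i : ℕ) + p ^ (j : ℕ)) else 0)
    (c : K) (hc : c ^ p = c) (hc1 : c ≠ 1) :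
    (∀ a b : K, {x : K | f (x + a) - c * f x = b}.ncard ≤ 2)
      ↔ (∀ a : K, a ≠ 0 → Function.Bijective (fun x : K => f (x + a) - f x)) := by
  obtain ⟨A, hA⟩ := hf
  haveI : Fact p.Prime := ⟨hp⟩
  haveI hch : CharP K p := by
    obtain ⟨q, hq_char⟩ := CharP.exists K
    haveI := hq_char
    have hqprime : q.Prime := CharP.char_is_prime K q
    haveI : Fact q.Prime := ⟨hqprime⟩
    obtain ⟨n, _, hcardq⟩ := FiniteField.card K q
    have hdvd : p ∣ q ^ (n : ℕ) := by
      rw [← hcardq, hK]; exact dvd_pow_self p (by omega)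
    have hpq : p = q := (Nat.prime_dvd_prime_iff_eq hp hqprime).mp (hp.dvd_of_dvd_pow hdvd)
    exact hpq ▸ hq_char
  have h2 : (2 : K) ≠ 0 := by
    intro h
    have hdvd : (p : ℕ) ∣ 2 := by
      rw [← CharP.cast_eq_zero_iff K p 2]; exact_mod_cast h
    have hp2 : p = 2 := (Nat.prime_dvd_prime_iff_eq hp Nat.prime_two).mp hdvd
    have := Nat.odd_iff.mp hodd
    omega
  have twocancel : ∀ t : K, (2 : K) * t = 0 → t = 0 := by
    intro t h
    rcases mul_eq_zero.mp h with h | h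
    · exact absurd h h2
    · exact h
  -- the symmetric bilinear form
  set B : K → K → K := fun x y => ∑ i : Fin m, ∑ j : Fin m,
      if (i : ℕ) ≤ (j : ℕ) then
        A i j * (x ^ (p ^ (i : ℕ)) * y ^ (p ^ (j : ℕ)) + y ^ (p ^ (i : ℕ)) * x ^ (p ^ (j : ℕ)))
      else 0 with hB
  have key : ∀ x y : K, f (x + y) = f x + f y + B x y := by
    intro x y
    rw [hA, hA, hA, hB]
    have hterm : ∀ i j : Fin m,
        (if (i : ℕ) ≤ (j : ℕ) then A i j * (x + y) ^ (p ^ (i : ℕ) + p ^ (j : ℕ)) else 0)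
        = ((if (i : ℕ) ≤ (j : ℕ) then A i j * x ^ (p ^ (i : ℕ) + p ^ (j : ℕ)) else 0)
          + (if (i : ℕ) ≤ (j : ℕ) then A i j * y ^ (p ^ (i : ℕ) + p ^ (j : ℕ)) else 0))
          + (if (i : ℕ) ≤ (j : ℕ) then
              A i j * (x ^ (p ^ (i : ℕ)) * y ^ (p ^ (j : ℕ))
                + y ^ (p ^ (i : ℕ)) * x ^ (p ^ (j : ℕ))) else 0) := by
      intro i j
      split_ifs with h
      · rw [pow_add, pow_add, pow_add, add_pow_char_pow, add_pow_char_pow]; ring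
      · ring
    simp only [hterm, Finset.sum_add_distrib]
  have f0 : f 0 = 0 := by
    rw [hA]
    refine Finset.sum_eq_zero fun i _ => Finset.sum_eq_zero fun j _ => ?_
    split_ifs
    · rw [zero_pow (add_pos (pow_pos hp.pos _) (pow_pos hp.pos _)).ne', mul_zero]
    · rfl
  have fneg : ∀ x : K, f (-x) = f x := by
    intro x
    rw [hA, hA]
    refine Finset.sum_congr rfl fun i _ => Finset.sum_congr rfl fun j _ => ?_
    split_ifs
    · rw [Even.neg_pow ((hodd.pow).add_odd (hodd.pow))]
    · rfl
  have Bsymm : ∀ x y : K, B x y = B y x := by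
    intro x y
    rw [hB]
    refine Finset.sum_congr rfl fun i _ => Finset.sum_congr rfl fun j _ => ?_
    split_ifs
    · ring
    · rfl
  have Bneg : ∀ x y : K, B (-x) y = -B x y := by
    intro x y
    rw [hB]
    simp only
    rw [← Finset.sum_neg_distrib]
    refine Finset.sum_congr rfl fun i _ => ?_
    rw [← Finset.sum_neg_distrib]
    refine Finset.sum_congr rfl fun j _ => ?_
    split_ifs
    · rw [Odd.neg_pow (hodd.pow), Odd.neg_pow (hodd.pow)]; ring
    · rw [neg_zero]
  have Badd : ∀ x x' y : K, B (x + x') y = B x y + B x' y := by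
    intro x x' y
    rw [hB]
    simp only
    rw [← Finset.sum_add_distrib]
    refine Finset.sum_congr rfl fun i _ => ?_
    rw [← Finset.sum_add_distrib]
    refine Finset.sum_congr rfl fun j _ => ?_
    split_ifs
    · rw [add_pow_char_pow, add_pow_char_pow]; ring
    · rw [add_zero]
  have lampow : ∀ lam : K, lam ^ p = lam → ∀ k : ℕ, lam ^ (p ^ k) = lam := by
    intro lam hl k
    induction k with
    | zero => simp
    | succ k ih => rw [pow_succ, pow_mul, ih, hl]
  have Bsmul : ∀ lam : K, lam ^ p = lam → ∀ x y : K, B x (lam * y) = lam * B x y := by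
    intro lam hl x y
    rw [hB]
    simp only
    rw [Finset.mul_sum]
    refine Finset.sum_congr rfl fun i _ => ?_
    rw [Finset.mul_sum]
    refine Finset.sum_congr rfl fun j _ => ?_
    split_ifs
    · rw [mul_pow, mul_pow, lampow lam hl, lampow lam hl]; ring
    · rw [mul_zero]
  set d : K := 1 - c with hd
  have hd0 : d ≠ 0 := sub_ne_zero.mpr (Ne.symm hc1)
  have hdp : d ^ p = d := by rw [hd, sub_pow_char, one_pow, hc]
  have hep : d⁻¹ ^ p = d⁻¹ := by rw [inv_pow, hdp]
  have hdd : d * d⁻¹ = 1 := mul_inv_cancel₀ hd0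
  have hcd : c = 1 - d := by rw [hd]; ring
  clear_value d
  have hdiff : ∀ u v : K, f (u + v) - f (u - v) = 2 * B u v := by
    intro u v
    rw [sub_eq_add_neg u v, key u v, key u (-v), fneg, Bsymm u (-v), Bneg, Bsymm]
    ring
  -- three distinct elements in a fiber give a contradiction with fiber ≤ 2
  have three : ∀ (t : K) (u v w : K), u ≠ v → u ≠ w → v ≠ w →
      f u = t → f v = t → f w = t → ¬ ({x : K | f x = t}.ncard ≤ 2) := by
    intro t u v w huv huw hvw hu hv hw hle
    have hsub : ({u, v, w} : Set K) ⊆ {x | f x = t} := by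
      intro x hx
      rcases hx with rfl | rfl | rfl
      · exact hu
      · exact hv
      · exact hw
    have h3 : ({u, v, w} : Set K).ncard = 3 := by
      rw [Set.ncard_insert_of_notMem (by simp [huv, huw]) (Set.toFinite _),
        Set.ncard_pair hvw]
    have := Set.ncard_le_ncard hsub (Set.toFinite _)
    omega
  -- fibers of size ≤ 2 implies planar
  have main1 : (∀ t : K, {x : K | f x = t}.ncard ≤ 2) →
      (∀ a : K, a ≠ 0 → Function.Bijective (fun x : K => f (x + a) - f x)) := by
    intro hfib a ha
    rw [← Finite.injective_iff_bijective]
    intro x y hxy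
    simp only [key] at hxy
    by_contra hne
    set z : K := x - y with hz
    have hz0 : z ≠ 0 := sub_ne_zero.mpr hne
    have hBza : B z a = 0 := by
      have hBxy : B x a = B y a := by linear_combination hxy
      rw [hz, sub_eq_add_neg, Badd, Bneg, hBxy]; ring
    have hfeq : f (a + z) = f (a - z) := by
      have h := hdiff a z
      rw [Bsymm, hBza, mul_zero] at h
      exact sub_eq_zero.mp h
    by_cases h1 : a + z = 0
    · have w2 : a - z ≠ 0 := by
        intro h
        exact ha (twocancel a (by linear_combination h1 + h))
      have ht : f (a - z) = 0 := by
        rw [← hfeq, h1, f0]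
      refine three 0 (a - z) (-(a - z)) 0 ?_ w2 (neg_ne_zero.mpr w2) ht (by rw [fneg]; exact ht)
        f0 (hfib 0)
      intro h
      exact w2 (twocancel _ (by linear_combination h))
    · refine three (f (a + z)) (a + z) (-(a + z)) (a - z) ?_ ?_ ?_ rfl (by rw [fneg])
        hfeq.symm (hfib _)
      · intro h
        exact h1 (twocancel _ (by linear_combination h))
      · intro h
        exact hz0 (twocancel _ (by linear_combination h))
      · intro h
        exact ha (twocancel _ (by linear_combination -h))
  -- planar implies fibers of size ≤ 2
  have main2 : (∀ a : K, a ≠ 0 → Function.Bijective (fun x : K => f (x + a) - f x)) →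
      (∀ t : K, {x : K | f x = t}.ncard ≤ 2) := by
    intro hpl t
    have hnd : ∀ u v : K, B u v = 0 → u = 0 ∨ v = 0 := by
      intro u v hB0
      by_contra hcon
      push_neg at hcon
      obtain ⟨hu, hv⟩ := hcon
      have hinj := (hpl v hv).injective
      have heq : f (u + v) - f u = f (0 + v) - f 0 := by
        rw [key u v, hB0, zero_add, f0]; ring
      exact hu (hinj heq)
    rcases Set.eq_empty_or_nonempty {x : K | f x = t} with he | ⟨y0, hy0⟩
    · rw [he]; simp
    · have hsub : {x : K | f x = t} ⊆ {y0, -y0} := by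
        intro y hy
        simp only [Set.mem_setOf_eq] at hy hy0
        set u : K := (2 : K)⁻¹ * (y + y0) with hu
        set v : K := (2 : K)⁻¹ * (y - y0) with hv
        have h2i : (2 : K) * (2 : K)⁻¹ = 1 := mul_inv_cancel₀ h2
        have huv1 : u + v = y := by
          rw [hu, hv]; field_simp; ring
        have huv2 : u - v = y0 := by
          rw [hu, hv]; field_simp; ring
        have hBuv : B u v = 0 := by
          apply twocancel
          rw [← hdiff u v, huv1, huv2, hy, hy0, sub_self]
        rcases hnd u v hBuv with h | h
        · right
          simp only [Set.mem_singleton_iff]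
          have hy1 : y = v := by rw [← huv1, h, zero_add]
          have hy2 : y0 = -v := by rw [← huv2, h, zero_sub]
          rw [hy1, hy2, neg_neg]
        · left
          rw [← huv1, ← huv2, h, add_zero, sub_zero]
      calc {x : K | f x = t}.ncard ≤ ({y0, -y0} : Set K).ncard :=
            Set.ncard_le_ncard hsub (Set.toFinite _)
        _ ≤ ({-y0} : Set K).ncard + 1 := Set.ncard_insert_le _ _
        _ ≤ 2 := by rw [Set.ncard_singleton]
  constructor
  · -- APcN → planar
    intro hap
    apply main1
    intro t
    have h := hap 0 (d * t)
    have hset : {x : K | f (x + 0) - c * f x = d * t} = {x : K | f x = t} := by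
      ext x
      simp only [Set.mem_setOf_eq, add_zero]
      constructor
      · intro hx
        have : d * f x = d * t := by linear_combination f x * hd + hx
        exact mul_left_cancel₀ hd0 this
      · intro hx
        rw [hx]; linear_combination (-t) * hd
    rwa [hset] at h
  · -- planar → APcN
    intro hpl a b
    have hfib := main2 hpl
    set t : K := d⁻¹ * (b - f a) + f (d⁻¹ * a) with ht
    have hident : ∀ x : K, f (x + a) - c * f x
        = d * f (x + d⁻¹ * a) + (f a - d * f (d⁻¹ * a)) := by
      intro x
      rw [key x a, key x (d⁻¹ * a), Bsmul d⁻¹ hep x a, hcd]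
      linear_combination (-(B x a)) * hdd
    have hset : {x : K | f (x + a) - c * f x = b}
        = (fun y : K => y - d⁻¹ * a) '' {y : K | f y = t} := by
      ext x
      simp only [Set.mem_setOf_eq, Set.mem_image]
      constructor
      · intro hx
        refine ⟨x + d⁻¹ * a, ?_, by ring⟩
        rw [hident x] at hx
        have hdx : d * f (x + d⁻¹ * a) = d * t := by
          rw [ht]
          linear_combination hx - (b - f a) * hdd
        exact mul_left_cancel₀ hd0 hdx
      · rintro ⟨y, hy, rfl⟩
        rw [hident]
        have hyy : y - d⁻¹ * a + d⁻¹ * a = y := by ring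
        rw [hyy, hy, ht]
        linear_combination (b - f a) * hdd
    have hinj : Function.Injective fun y : K => y - d⁻¹ * a := by
      intro y1 y2 h
      simpa using h
    rw [hset, Set.ncard_image_of_injective _ hinj]
    exact hfib t
end

section
/- Let p be a prime, m ≥ 1, K = F_{p^m}, c ∈ K with c^p = c and c ≠ 1, and let f : K → K be a quadratic function (with zero constant term). Then f is a bijection of K if and only if f is PcN with respect to c, i.e., if and only if for every a ∈ K the map x ↦ f(x+a) − c·f(x) is a bijection of K. -/
/-- A quadratic function over `F_{p^m}` is a bijection if and only if it is
PcN with respect to a prime-field constant `c ≠ 1`. -/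
theorem stmt_3 (p m : ℕ) (hp : p.Prime) (hm : 1 ≤ m)
    (K : Type*) [Field K] [Fintype K] (hK : Fintype.card K = p ^ m)
    (f : K → K)
    (hf : ∃ (a : Fin m × Fin m → K) (b : Fin m → K), ∀ x : K,
      f x = (∑ ij : Fin m × Fin m, a ij * x ^ (p ^ (ij.1 : ℕ) + p ^ (ij.2 : ℕ)))
        + ∑ i : Fin m, b i * x ^ p ^ (i : ℕ))
    (c : K) (hc : c ^ p = c) (hc1 : c ≠ 1) :
    Function.Bijective f
      ↔ (∀ a : K, Function.Bijective (fun x : K => f (x + a) - c * f x)) := by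
  classical
  obtain ⟨A, B, hf⟩ := hf
  -- characteristic of K is p
  have hcharP : CharP K p := by
    obtain ⟨q, hq⟩ := CharP.exists K
    obtain ⟨n, hqp, hcard⟩ := @FiniteField.card K _ _ q hq
    rw [hK] at hcard
    have hdvd : q ∣ p ^ m := hcard ▸ dvd_pow_self q n.2.ne'
    have : q = p := ((Nat.prime_dvd_prime_iff_eq hqp hp).mp
      (hqp.dvd_of_dvd_pow hdvd))
    exact this ▸ hq
  haveI := hcharP
  haveI : Fact p.Prime := ⟨hp⟩
  set u : K := 1 - c with hu_def
  have hu : u ≠ 0 := sub_ne_zero.mpr (Ne.symm hc1)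
  have hcpow : ∀ n : ℕ, c ^ p ^ n = c := by
    intro n
    induction n with
    | zero => simp
    | succ n ih => rw [pow_succ, pow_mul, ih, hc]
  have hupow : ∀ n : ℕ, u ^ p ^ n = u := by
    intro n
    rw [hu_def, sub_pow_char_pow, one_pow, hcpow]
  have hadd : ∀ (y z : K) (n : ℕ), (y + z) ^ p ^ n = y ^ p ^ n + z ^ p ^ n :=
    fun y z n => add_pow_char_pow y z p n
  have hd : ∀ (a : K) (n : ℕ), (u⁻¹ * a) ^ p ^ n = u⁻¹ * a ^ p ^ n := by
    intro a n
    rw [mul_pow, inv_pow, hupow]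
  -- bilinear form
  set B2 : K → K → K := fun y z => ∑ ij : Fin m × Fin m,
    A ij * (y ^ p ^ (ij.1 : ℕ) * z ^ p ^ (ij.2 : ℕ)
      + z ^ p ^ (ij.1 : ℕ) * y ^ p ^ (ij.2 : ℕ)) with hB2
  have hexp : ∀ y z : K, f (y + z) = f y + f z + B2 y z := by
    intro y z
    simp only [hf, hB2, pow_add, hadd]
    calc (∑ ij : Fin m × Fin m, A ij * ((y ^ p ^ (ij.1 : ℕ) + z ^ p ^ (ij.1 : ℕ))
            * (y ^ p ^ (ij.2 : ℕ) + z ^ p ^ (ij.2 : ℕ))))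
          + ∑ i : Fin m, B i * (y ^ p ^ (i : ℕ) + z ^ p ^ (i : ℕ))
        = (∑ ij : Fin m × Fin m, (A ij * (y ^ p ^ (ij.1 : ℕ) * y ^ p ^ (ij.2 : ℕ))
            + A ij * (z ^ p ^ (ij.1 : ℕ) * z ^ p ^ (ij.2 : ℕ))
            + A ij * (y ^ p ^ (ij.1 : ℕ) * z ^ p ^ (ij.2 : ℕ)
              + z ^ p ^ (ij.1 : ℕ) * y ^ p ^ (ij.2 : ℕ))))
          + ∑ i : Fin m, (B i * y ^ p ^ (i : ℕ) + B i * z ^ p ^ (i : ℕ)) := by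
          refine congrArg₂ (· + ·) ?_ ?_ <;>
            [skip; skip] <;> refine Finset.sum_congr rfl fun ij _ => by ring
      _ = _ := by
          simp only [Finset.sum_add_distrib]
          ring
  have hlin2 : ∀ x a : K, B2 x (u⁻¹ * a) = u⁻¹ * B2 x a := by
    intro x a
    simp only [hB2, hd]
    rw [Finset.mul_sum]
    exact Finset.sum_congr rfl fun ij _ => by ring
  have key : ∀ a x : K, f (x + a) - c * f x
      = u * f (x + u⁻¹ * a) + (f a - u * f (u⁻¹ * a)) := by
    intro a x
    rw [hexp x a, hexp x (u⁻¹ * a), hlin2]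
    have hcu : c = 1 - u := by rw [hu_def]; ring
    rw [hcu]
    field_simp
    ring
  constructor
  · intro hbij a
    have heq : (fun x : K => f (x + a) - c * f x)
        = (fun y : K => y + (f a - u * f (u⁻¹ * a))) ∘ (fun y : K => u * y) ∘ f
          ∘ (fun x : K => x + u⁻¹ * a) := funext fun x => key a x
    rw [heq]
    exact ((Equiv.addRight (f a - u * f (u⁻¹ * a))).bijective.comp
      ((Equiv.mulLeft₀ u hu).bijective.comp hbij)).comp
      (Equiv.addRight (u⁻¹ * a)).bijective
  · intro hPcN
    have hb := hPcN 0
    have heq : (fun x : K => f (x + 0) - c * f x)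
        = (fun y : K => y + (f 0 - u * f 0)) ∘ (fun y : K => u * y) ∘ f := by
      funext x
      simp only [Function.comp_apply]
      have := key 0 x
      simpa using this
    rw [heq] at hb
    set C : K := f 0 - u * f 0 with hC
    set e : K ≃ K := (Equiv.mulLeft₀ u hu).trans (Equiv.addRight C) with he
    have hb' : Function.Bijective (⇑e ∘ f) := hb
    have hfe : f = ⇑e.symm ∘ (⇑e ∘ f) := by
      funext x
      exact (e.symm_apply_apply (f x)).symm
    rw [hfe]
    exact e.symm.bijective.comp hb'
end

section
/- Let K be a finite field of characteristic 2 and let c ∈ K with c ≠ 1. Let f : K → K be a function such that for every γ ∈ K with γ ≠ 0 the map x ↦ f(x+γ) + c·f(x) is a bijection of K. Then f itself is a bijection of K. -/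
/-- Over a finite field of characteristic 2, if all nonzero-direction
`c`-derivatives of `f` (with `c ≠ 1`) are bijections, then `f` itself is a bijection. -/
theorem stmt_4 (K : Type*) [Field K] [Fintype K] [CharP K 2]
    (c : K) (hc : c ≠ 1) (f : K → K)
    (h : ∀ γ : K, γ ≠ 0 → Function.Bijective (fun x : K => f (x + γ) + c * f x)) :
    Function.Bijective f := by
  rw [Finite.injective_iff_bijective.symm]
  intro a b hab
  by_contra hne
  have hγ : b - a ≠ 0 := sub_ne_zero.mpr fun e => hne e.symm
  have hinj := (h (b - a) hγ).injective
  have key : a = b := by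
    apply hinj
    simp only
    have h1 : a + (b - a) = b := by ring
    have h2 : b + (b - a) = a := by
      have := CharP.cast_eq_zero K 2
      push_cast at this
      linear_combination (b - a) * this
    rw [h1, h2, hab]
  exact hne key
end

section
/- Fix a prime p, integers m, n ≥ 1, set q = p^m, and let K be a finite field with q^n elements. Let φ(x) = Σ_{i=0}^{n−1} a_i·x^{q^i} with all a_i ∈ F_q = {x ∈ K : x^q = x}, let g : K → K be an arbitrary function, let b ∈ F_q, b ≠ 0, and define f₁(x) = b·φ(x) + Tr(g(x^q − x)), where Tr(y) = Σ_{i=0}^{n−1} y^{q^i}. If f₁ is a bijection of K, then f₁ is PcN with respect to every c ∈ F_q with c ≠ 1: for every such c and every γ ∈ K, the map x ↦ f₁(x+γ) − c·f₁(x) is a bijection of K. -/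
/-- If `f₁(x) = b·φ(x) + Tr(g(x^q − x))` (with `φ` an `F_q`-linear
polynomial with coefficients in `F_q` and `b ∈ F_q \ {0}`) is a bijection of
`K = F_{q^n}`, then `f₁` is PcN for every `c ∈ F_q`, `c ≠ 1`. -/
theorem stmt_5 (p m n : ℕ) (hp : p.Prime) (hm : 1 ≤ m) (hn : 1 ≤ n)
    (q : ℕ) (hq : q = p ^ m)
    (K : Type*) [Field K] [Fintype K] (hK : Fintype.card K = q ^ n)
    (a : Fin n → K) (ha : ∀ i, a i ^ q = a i)
    (g : K → K) (b : K) (hb : b ^ q = b) (hb0 : b ≠ 0)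
    (f₁ : K → K)
    (hf₁ : ∀ x : K, f₁ x = b * (∑ i : Fin n, a i * x ^ q ^ (i : ℕ))
        + ∑ i : Fin n, (g (x ^ q - x)) ^ q ^ (i : ℕ))
    (hbij : Function.Bijective f₁)
    (c : K) (hc : c ^ q = c) (hc1 : c ≠ 1) (γ : K) :
    Function.Bijective (fun x : K => f₁ (x + γ) - c * f₁ x) := by
  haveI : Fact p.Prime := ⟨hp⟩
  have hq0 : q ≠ 0 := by rw [hq]; exact pow_ne_zero _ hp.pos.ne'
  -- characteristic of K is p
  have hchar : CharP K p := by
    have h0 : (p : K) = 0 := by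
      have h1 := FiniteField.cast_card_eq_zero K
      rw [hK, hq, ← pow_mul] at h1
      push_cast at h1
      have hmn : m * n ≠ 0 := by positivity
      exact pow_eq_zero_iff hmn |>.mp h1
    have hdvd : ringChar K ∣ p := (ringChar.spec K p).mp h0
    have : ringChar K = p := by
      rcases hp.eq_one_or_self_of_dvd _ hdvd with h | h
      · exact absurd h (CharP.ringChar_ne_one)
      · exact h
    exact this ▸ ringChar.charP K
  haveI := hchar
  -- basic Frobenius facts
  have haddq : ∀ z w : K, (z + w) ^ q = z ^ q + w ^ q := by
    intro z w; rw [hq]; exact add_pow_char_pow ..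
  have hsubq : ∀ z w : K, (z - w) ^ q = z ^ q - w ^ q := by
    intro z w; rw [hq]; exact sub_pow_char_pow ..
  have hmulq : ∀ z w : K, z ^ q = z → w ^ q = w → (z * w) ^ q = z * w := by
    intro z w hz hw; rw [mul_pow, hz, hw]
  have hsubfix : ∀ z w : K, z ^ q = z → w ^ q = w → (z - w) ^ q = z - w := by
    intro z w hz hw; rw [hsubq, hz, hw]
  have haddfix : ∀ z w : K, z ^ q = z → w ^ q = w → (z + w) ^ q = z + w := by
    intro z w hz hw; rw [haddq, hz, hw]
  -- coset fact : (z+u)^(q^k) = z^(q^k) + u for u fixed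
  have hcoset : ∀ (z u : K), u ^ q = u → ∀ k : ℕ, (z + u) ^ q ^ k = z ^ q ^ k + u := by
    intro z u hu k
    induction k with
    | zero => simp
    | succ k ih =>
      calc (z + u) ^ q ^ (k + 1) = ((z + u) ^ q ^ k) ^ q := by rw [← pow_mul, pow_succ]
        _ = (z ^ q ^ k + u) ^ q := by rw [ih]
        _ = (z ^ q ^ k) ^ q + u ^ q := haddq _ _
        _ = z ^ q ^ (k + 1) + u := by rw [hu, ← pow_mul, ← pow_succ]
  have hpowcard : ∀ z : K, z ^ q ^ n = z := by
    intro z; rw [← hK]; exact FiniteField.pow_card z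
  -- trace lands in F_q
  have hTr : ∀ y : K, (∑ i : Fin n, y ^ q ^ (i : ℕ)) ^ q = ∑ i : Fin n, y ^ q ^ (i : ℕ) := by
    intro y
    rw [Fin.sum_univ_eq_sum_range (fun i => y ^ q ^ i) n]
    have hsum : (∑ i ∈ Finset.range n, y ^ q ^ i) ^ q
        = ∑ i ∈ Finset.range n, y ^ q ^ (i + 1) := by
      rw [hq, sum_pow_char_pow]
      exact Finset.sum_congr rfl fun i _ => by
        rw [← hq, ← pow_mul, ← pow_succ]
    rw [hsum]
    have h1 := Finset.sum_range_succ' (fun i => y ^ q ^ i) n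
    have h2 := Finset.sum_range_succ (fun i => y ^ q ^ i) n
    simp only [hpowcard, pow_zero, pow_one] at h1 h2
    linear_combination h2 - h1
  -- shorthand
  set φf : K → K := fun x => ∑ i : Fin n, a i * x ^ q ^ (i : ℕ) with hφf
  set T : K → K := fun x => ∑ i : Fin n, (g (x ^ q - x)) ^ q ^ (i : ℕ) with hT
  have hf : ∀ x : K, f₁ x = b * φf x + T x := hf₁
  have hTfix : ∀ x : K, (T x) ^ q = T x := fun x => hTr _
  have hAfix : (∑ i : Fin n, a i) ^ q = ∑ i : Fin n, a i := by
    have : ∀ (s : Finset (Fin n)), (∑ i ∈ s, a i) ^ q = ∑ i ∈ s, a i := by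
      intro s
      induction s using Finset.induction with
      | empty => simp [zero_pow hq0]
      | insert _ _ hns ih => rw [Finset.sum_insert hns]; exact haddfix _ _ (ha _) ih
    exact this _
  -- f₁ on cosets of F_q
  have fact_coset : ∀ (z u : K), u ^ q = u →
      f₁ (z + u) = f₁ z + b * (∑ i : Fin n, a i) * u := by
    intro z u hu
    rw [hf, hf]
    have h1 : (z + u) ^ q - (z + u) = z ^ q - z := by rw [haddq z u, hu]; ring
    have h2 : φf (z + u) = φf z + (∑ i : Fin n, a i) * u := by
      show (∑ i : Fin n, a i * (z + u) ^ q ^ (i : ℕ))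
          = (∑ i : Fin n, a i * z ^ q ^ (i : ℕ)) + (∑ i : Fin n, a i) * u
      rw [Finset.sum_mul, ← Finset.sum_add_distrib]
      exact Finset.sum_congr rfl fun i _ => by rw [hcoset z u hu]; ring
    have h3 : T (z + u) = T z := by
      show (∑ i : Fin n, (g ((z + u) ^ q - (z + u))) ^ q ^ (i : ℕ)) = _
      rw [h1]
    rw [h2, h3]; ring
  -- additivity of φf differences
  have hphi_add : ∀ z : K, φf (z + γ) = φf z + φf γ := by
    intro z
    simp only [hφf]
    rw [← Finset.sum_add_distrib]
    exact Finset.sum_congr rfl fun i _ => by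
      rw [show (z + γ) ^ q ^ (i : ℕ) = z ^ q ^ (i : ℕ) + γ ^ q ^ (i : ℕ) by
        rw [hq, ← pow_mul]; exact add_pow_char_pow ..]
      ring
  have h1c : (1 : K) - c ≠ 0 := sub_ne_zero.mpr (Ne.symm hc1)
  have h1cfix : ((1 : K) - c) ^ q = 1 - c := hsubfix 1 c (one_pow q) hc
  -- A ≠ 0
  have hA0 : (∑ i : Fin n, a i) ≠ 0 := by
    intro h
    have := fact_coset 0 1 (one_pow q)
    rw [h] at this
    simp at this
    have := hbij.injective this
    simp at this
  -- now injectivity of the difference map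
  have hinj : Function.Injective (fun x : K => f₁ (x + γ) - c * f₁ x) := by
    intro x y hxy
    simp only at hxy
    -- Step A : (1-c)*b*(φf x - φf y) is fixed by ^q
    have key : (1 - c) * b * (φf x - φf y)
        = (T (y + γ) - T (x + γ)) + c * (T x - T y) := by
      have H := hxy
      rw [hf (x + γ), hf (y + γ), hf x, hf y, hphi_add x, hphi_add y] at H
      linear_combination H
    have hwfix : (φf x - φf y) ^ q = φf x - φf y := by
      have hd : ((1 - c) * b) ^ q = (1 - c) * b := hmulq _ _ h1cfix hb
      have hd0 : (1 - c) * b ≠ 0 := mul_ne_zero h1c hb0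
      have hr : ((1 - c) * b * (φf x - φf y)) ^ q = (1 - c) * b * (φf x - φf y) := by
        rw [key]
        exact haddfix _ _ (hsubfix _ _ (hTfix _) (hTfix _))
          (hmulq _ _ hc (hsubfix _ _ (hTfix _) (hTfix _)))
      rw [mul_pow, hd] at hr
      exact mul_left_cancel₀ hd0 hr
    -- Step B : f₁ x - f₁ y is fixed
    have hvfix : (f₁ x - f₁ y) ^ q = f₁ x - f₁ y := by
      have : f₁ x - f₁ y = b * (φf x - φf y) + (T x - T y) := by
        rw [hf x, hf y]; ring
      rw [this]
      exact haddfix _ _ (hmulq _ _ hb hwfix) (hsubfix _ _ (hTfix _) (hTfix _))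
    -- Step D : x = y + u with u in F_q
    have hbA0 : b * (∑ i : Fin n, a i) ≠ 0 := mul_ne_zero hb0 hA0
    set u : K := (f₁ x - f₁ y) / (b * (∑ i : Fin n, a i)) with hu_def
    have hufix : u ^ q = u := by
      rw [hu_def, div_pow, hvfix, mul_pow, hb, hAfix]
    have hfyu : f₁ (y + u) = f₁ x := by
      rw [fact_coset y u hufix, hu_def, mul_div_cancel₀ _ hbA0]; ring
    have hxyu : x = y + u := (hbij.injective hfyu).symm
    -- Step E : u = 0
    have hfin : (1 - c) * (b * (∑ i : Fin n, a i)) * u = 0 := by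
      have H := hxy
      rw [hxyu] at H
      rw [show y + u + γ = (y + γ) + u by ring] at H
      rw [fact_coset (y + γ) u hufix, fact_coset y u hufix] at H
      linear_combination H
    have hu0 : u = 0 := by
      rcases mul_eq_zero.mp hfin with h | h
      · exact absurd h (mul_ne_zero h1c hbA0)
      · exact h
    rw [hxyu, hu0, add_zero]
  exact Finite.injective_iff_bijective.mp hinj
end

section
/- Fix a prime p, integers m, n ≥ 1, set q = p^m, and let K be a finite field with q^n elements. Let φ(x) = Σ_{i=0}^{n−1} a_i·x^{q^i} with all a_i ∈ F_q = {x ∈ K : x^q = x}, let g : K → K be an arbitrary function, let b ∈ F_q, b ≠ 0, and define f₂(x) = b·φ(x) + (g(x^q − x))^{(q^n−1)/(q−1)}. If f₂ is a bijection of K, then f₂ is PcN with respect to every c ∈ F_q with c ≠ 1: for every such c and every γ ∈ K, the map x ↦ f₂(x+γ) − c·f₂(x) is a bijection of K. -/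
/-- If `f₂(x) = b·φ(x) + g(x^q − x)^{(q^n−1)/(q−1)}` (with `φ` an
`F_q`-linear polynomial with coefficients in `F_q` and `b ∈ F_q \ {0}`) is a bijection
of `K = F_{q^n}`, then `f₂` is PcN for every `c ∈ F_q`, `c ≠ 1`. -/
theorem stmt_6 (p m n : ℕ) (hp : p.Prime) (hm : 1 ≤ m) (hn : 1 ≤ n)
    (q : ℕ) (hq : q = p ^ m)
    (K : Type*) [Field K] [Fintype K] (hK : Fintype.card K = q ^ n)
    (a : Fin n → K) (ha : ∀ i, a i ^ q = a i)
    (g : K → K) (b : K) (hb : b ^ q = b) (hb0 : b ≠ 0)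
    (f₂ : K → K)
    (hf₂ : ∀ x : K, f₂ x = b * (∑ i : Fin n, a i * x ^ q ^ (i : ℕ))
        + (g (x ^ q - x)) ^ ((q ^ n - 1) / (q - 1)))
    (hbij : Function.Bijective f₂)
    (c : K) (hc : c ^ q = c) (hc1 : c ≠ 1) (γ : K) :
    Function.Bijective (fun x : K => f₂ (x + γ) - c * f₂ x) := by
  haveI : Fact p.Prime := ⟨hp⟩
  have hq2 : 2 ≤ q := by
    rw [hq]
    calc 2 ≤ p := hp.two_le
    _ ≤ p ^ m := Nat.le_self_pow (by omega) p
  haveI hcharP : CharP K p := by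
    have hdvd : p ∣ ringChar K := by
      rw [prime_dvd_char_iff_dvd_card p, hK, hq, ← pow_mul]
      exact dvd_pow_self p (by positivity)
    have hrc : (ringChar K).Prime := CharP.char_is_prime K (ringChar K)
    have hpr : p = ringChar K := (Nat.prime_dvd_prime_iff_eq hp hrc).mp hdvd
    rw [hpr]
    exact ringChar.charP K
  -- Frobenius-type facts
  have haddqk : ∀ (x y : K) (k : ℕ), (x + y) ^ q ^ k = x ^ q ^ k + y ^ q ^ k := by
    intro x y k
    rw [hq, ← pow_mul]
    have := add_pow_char_pow (R := K) (x := x) (y := y) (p := p) (n := m * k)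
    simpa using this
  have haddq : ∀ (x y : K), (x + y) ^ q = x ^ q + y ^ q := by
    intro x y
    simpa using haddqk x y 1
  have hsubq : ∀ (x y : K), (x - y) ^ q = x ^ q - y ^ q := by
    intro x y
    rw [hq]
    have := sub_pow_char_pow (R := K) (x := x) (y := y) (p := p) (n := m)
    simpa using this
  have hfix : ∀ s : K, s ^ q = s → ∀ k : ℕ, s ^ q ^ k = s := by
    intro s hs k
    induction k with
    | zero => simp
    | succ k ih => rw [pow_succ, pow_mul, ih, hs]
  -- the norm exponent
  set N : ℕ := (q ^ n - 1) / (q - 1) with hN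
  have hqn : q ≤ q ^ n := Nat.le_self_pow (by omega) q
  have hdvdN : (q - 1) ∣ q ^ n - 1 := by
    simpa using Nat.sub_dvd_pow_sub_pow q 1 n
  have hNmul : N * (q - 1) = q ^ n - 1 := Nat.div_mul_cancel hdvdN
  have hN1 : 1 ≤ N := by
    rw [hN]
    rw [Nat.le_div_iff_mul_le (by omega)]
    omega
  have hGq : ∀ w : K, (w ^ N) ^ q = w ^ N := by
    intro w
    rcases eq_or_ne w 0 with rfl | hw
    · rw [zero_pow (by omega : N ≠ 0), zero_pow (by omega : q ≠ 0)]
    · have h1 : w ^ (q ^ n - 1) = 1 := by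
        have := FiniteField.pow_card_sub_one_eq_one w hw
        rwa [hK] at this
      rw [← pow_mul]
      have hNq : N * q = (q ^ n - 1) + N := by
        have hq1 : q - 1 + 1 = q := by omega
        calc N * q = N * (q - 1 + 1) := by rw [hq1]
        _ = N * (q - 1) + N := by ring
        _ = q ^ n - 1 + N := by rw [hNmul]
      rw [hNq, pow_add, h1, one_mul]
  -- F_q closure facts
  have hFq_sub : ∀ u v : K, u ^ q = u → v ^ q = v → (u - v) ^ q = u - v := by
    intro u v hu hv; rw [hsubq, hu, hv]
  have hFq_add : ∀ u v : K, u ^ q = u → v ^ q = v → (u + v) ^ q = u + v := by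
    intro u v hu hv; rw [haddq, hu, hv]
  -- the linear part
  set A : K := ∑ i : Fin n, a i with hA
  have hAq : A ^ q = A := by
    rw [hA]
    induction (Finset.univ : Finset (Fin n)) using Finset.induction with
    | empty => simp [zero_pow (by omega : q ≠ 0)]
    | insert _ _ hx ih =>
        rw [Finset.sum_insert hx, haddq, ha, ih]
  have hphi_add : ∀ x y : K,
      (∑ i : Fin n, a i * (x + y) ^ q ^ (i : ℕ))
        = (∑ i : Fin n, a i * x ^ q ^ (i : ℕ)) + (∑ i : Fin n, a i * y ^ q ^ (i : ℕ)) := by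
    intro x y
    rw [← Finset.sum_add_distrib]
    refine Finset.sum_congr rfl fun i _ => ?_
    rw [haddqk]; ring
  have hphi_fq : ∀ r : K, r ^ q = r → (∑ i : Fin n, a i * r ^ q ^ (i : ℕ)) = A * r := by
    intro r hr
    rw [hA, Finset.sum_mul]
    refine Finset.sum_congr rfl fun i _ => ?_
    rw [hfix r hr]
  -- coset shift formula
  have hshift : ∀ x r : K, r ^ q = r → f₂ (x + r) = f₂ x + b * A * r := by
    intro x r hr
    rw [hf₂ (x + r), hf₂ x]
    have h1 : (x + r) ^ q - (x + r) = x ^ q - x := by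
      rw [haddq, hr]; ring
    rw [h1, hphi_add, hphi_fq r hr]
    ring
  -- b * A ≠ 0
  have hbA : b * A ≠ 0 := by
    intro h0
    have h1 : f₂ (0 + 1) = f₂ 0 + b * A * 1 := hshift 0 1 (one_pow q)
    rw [h0] at h1
    simp at h1
    have : (0 : K) + 1 = 0 := hbij.1 (by simpa using h1)
    simp at this
  -- main injectivity argument
  have hinj : Function.Injective (fun x : K => f₂ (x + γ) - c * f₂ x) := by
    intro x y hxy
    simp only at hxy
    -- the difference of f₂-values lies in F_q
    have hB : (f₂ (x + γ) - f₂ (y + γ) - (f₂ x - f₂ y)) ^ q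
        = f₂ (x + γ) - f₂ (y + γ) - (f₂ x - f₂ y) := by
      have hexp : f₂ (x + γ) - f₂ (y + γ) - (f₂ x - f₂ y)
          = (g ((x + γ) ^ q - (x + γ)) ^ N - g ((y + γ) ^ q - (y + γ)) ^ N)
            - (g (x ^ q - x) ^ N - g (y ^ q - y) ^ N) := by
        rw [hf₂ (x + γ), hf₂ (y + γ), hf₂ x, hf₂ y, hphi_add x γ, hphi_add y γ]
        ring
      rw [hexp]
      exact hFq_sub _ _ (hFq_sub _ _ (hGq _) (hGq _)) (hFq_sub _ _ (hGq _) (hGq _))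
    have hAeq : f₂ (x + γ) - f₂ (y + γ) = c * (f₂ x - f₂ y) := by
      linear_combination hxy
    have hc1' : c - 1 ≠ 0 := sub_ne_zero.mpr hc1
    have hcq : (c - 1) ^ q = c - 1 := hFq_sub c 1 hc (one_pow q)
    -- deduce f₂ x - f₂ y ∈ F_q
    have hBfq : (f₂ x - f₂ y) ^ q = f₂ x - f₂ y := by
      have h1 : ((c - 1) * (f₂ x - f₂ y)) ^ q = (c - 1) * (f₂ x - f₂ y) := by
        have : (c - 1) * (f₂ x - f₂ y)
            = f₂ (x + γ) - f₂ (y + γ) - (f₂ x - f₂ y) := by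
          rw [hAeq]; ring
        rw [this]; exact hB
      rw [mul_pow, hcq] at h1
      exact mul_left_cancel₀ hc1' h1
    -- find r ∈ F_q with x = y + r
    set r : K := (f₂ x - f₂ y) / (b * A) with hr
    have hrq : r ^ q = r := by
      rw [hr, div_pow, hBfq, mul_pow, hb, hAq]
    have hxyr : x = y + r := by
      have h1 : f₂ (y + r) = f₂ y + b * A * r := hshift y r hrq
      have h2 : b * A * r = f₂ x - f₂ y := by
        have hA0 : A ≠ 0 := right_ne_zero_of_mul hbA
        rw [hr]; field_simp
      rw [h2] at h1
      have h3 : f₂ (y + r) = f₂ x := by rw [h1]; ring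
      exact (hbij.1 h3).symm
    -- conclude r = 0
    have h4 : f₂ (x + γ) = f₂ (y + γ) + b * A * r := by
      rw [hxyr, add_right_comm]
      exact hshift (y + γ) r hrq
    have h5 : f₂ x = f₂ y + b * A * r := by
      rw [hxyr]; exact hshift y r hrq
    rw [h4, h5] at hxy
    have h6 : b * A * r * (1 - c) = 0 := by linear_combination hxy
    have h7 : (1 : K) - c ≠ 0 := fun h => hc1 (sub_eq_zero.mp h).symm
    have h8 : r = 0 := by
      rcases mul_eq_zero.mp h6 with h | h
      · rcases mul_eq_zero.mp h with h | h
        · exact absurd h hbA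
        · exact h
      · exact absurd h h7
    rw [hxyr, h8, add_zero]
  exact Finite.injective_iff_bijective.mp hinj
end

section
/- Fix a prime p and m ≥ 1, set q = p^m, and let K be a finite field with q² elements. Let J = {x^q − x : x ∈ K}, let g : K → K be a function with g(J) ⊆ J, let φ(x) = a₀·x + a₁·x^q with a₀, a₁ ∈ F_q = {x ∈ K : x^q = x}, let s = p^h + p^k for some 1 ≤ h ≤ k ≤ 2m−1, and let b ∈ F_q, b ≠ 0. If f(x) = b·φ(x) + (g(x^q − x))^s is a bijection of K, then f is PcN with respect to every c ∈ F_q with c ≠ 1: for every such c and every γ ∈ K, the map x ↦ f(x+γ) − c·f(x) is a bijection of K. -/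
/-- If `f(x) = b·φ(x) + g(x^q − x)^s` as in Statement 7 is a bijection of
`K = F_{q²}`, then `f` is PcN for every `c ∈ F_q` with `c ≠ 1`. -/
theorem stmt_9 (p m : ℕ) (hp : p.Prime) (hm : 1 ≤ m) (q : ℕ) (hq : q = p ^ m)
    (K : Type*) [Field K] [Fintype K] (hK : Fintype.card K = q ^ 2)
    (J : Set K) (hJ : J = {y : K | ∃ x : K, y = x ^ q - x})
    (g : K → K) (hg : ∀ y ∈ J, g y ∈ J)
    (a₀ a₁ : K) (ha₀ : a₀ ^ q = a₀) (ha₁ : a₁ ^ q = a₁)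
    (h k : ℕ) (hh : 1 ≤ h) (hhk : h ≤ k) (hk : k ≤ 2 * m - 1)
    (s : ℕ) (hs : s = p ^ h + p ^ k)
    (b : K) (hb : b ^ q = b) (hb0 : b ≠ 0)
    (f : K → K)
    (hf : ∀ x : K, f x = b * (a₀ * x + a₁ * x ^ q) + (g (x ^ q - x)) ^ s)
    (hbij : Function.Bijective f)
    (c : K) (hc : c ^ q = c) (hc1 : c ≠ 1) (γ : K) :
    Function.Bijective (fun x : K => f (x + γ) - c * f x) := by
  haveI : Fact p.Prime := ⟨hp⟩
  haveI : DecidableEq K := Classical.decEq K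
  -- basic numeric facts
  have hq2 : 2 ≤ q := by
    rw [hq]
    calc 2 ≤ p := hp.two_le
    _ ≤ p ^ m := Nat.le_self_pow (by omega) p
  -- characteristic of K is p
  haveI : CharP K (ringChar K) := ringChar.charP K
  have hrp : ringChar K = p := by
    obtain ⟨n, hrprime, hcard⟩ := FiniteField.card K (ringChar K)
    rw [hK, hq] at hcard
    have hdvd : p ∣ ringChar K ^ (n : ℕ) := by
      rw [← hcard, ← pow_mul]
      exact dvd_pow_self p (by positivity)
    have := (Nat.Prime.dvd_of_dvd_pow hp hdvd)
    exact ((Nat.prime_dvd_prime_iff_eq hp hrprime).mp this).symm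
  haveI hcharp : CharP K p := hrp ▸ ringChar.charP K
  -- Frobenius facts
  have hadd : ∀ u v : K, (u + v) ^ q = u ^ q + v ^ q := by
    intro u v; rw [hq]; exact add_pow_char_pow u v p m
  have hsub : ∀ u v : K, (u - v) ^ q = u ^ q - v ^ q := by
    intro u v
    have h1 := hadd (u - v) v
    rw [sub_add_cancel] at h1
    linear_combination -h1
  have hqq : ∀ x : K, (x ^ q) ^ q = x := by
    intro x
    rw [← pow_mul, ← sq, ← hK, FiniteField.pow_card]
  have hneg : ∀ t : ℕ, ((-1 : K)) ^ (p ^ t) = -1 := by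
    intro t
    have h1 := map_neg (iterateFrobenius K p t) 1
    simpa [iterateFrobenius_def] using h1
  have hs1 : ((-1 : K)) ^ s = 1 := by
    rw [hs, pow_add, hneg, hneg]; ring
  have hJfix : ∀ x : K, (x ^ q - x) ^ q = -(x ^ q - x) := by
    intro x; rw [hsub, hqq]; ring
  -- the terms g(x^q - x)^s lie in F_q
  have hw : ∀ x : K, ((g (x ^ q - x)) ^ s) ^ q = (g (x ^ q - x)) ^ s := by
    intro x
    have hmem : g (x ^ q - x) ∈ J := hg _ (by rw [hJ]; exact ⟨x, rfl⟩)
    rw [hJ] at hmem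
    obtain ⟨z, hz⟩ := hmem
    rw [hz, ← pow_mul, mul_comm s q, pow_mul, hJfix z, neg_eq_neg_one_mul,
      mul_pow, hs1, one_mul]
  -- Frobenius image of f
  have hfq : ∀ x : K, (f x) ^ q = b * (a₀ * x ^ q + a₁ * x) + (g (x ^ q - x)) ^ s := by
    intro x
    rw [hf, hadd, mul_pow, hadd, mul_pow, mul_pow, hb, ha₀, ha₁, hqq, hw]
  have hE : ∀ x : K, (f x) ^ q - f x = b * (a₀ - a₁) * (x ^ q - x) := by
    intro x; rw [hfq, hf]; ring
  -- a₀ + a₁ ≠ 0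
  have hq0 : q ≠ 0 := by omega
  have hsum : a₀ + a₁ ≠ 0 := by
    intro h0
    have h1 : f 1 = f 0 := by
      rw [hf, hf, one_pow, zero_pow hq0, sub_self, sub_self]
      linear_combination b * h0
    have := hbij.1 h1
    exact one_ne_zero this
  -- a₀ - a₁ ≠ 0
  have hdiff : a₀ - a₁ ≠ 0 := by
    intro h0
    have hall : ∀ z : K, z ^ q = z := by
      intro z
      obtain ⟨x, rfl⟩ := hbij.2 z
      have h1 := hE x
      rw [h0] at h1
      have h2 : (f x) ^ q - f x = 0 := by rw [h1]; ring
      linear_combination h2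
    obtain ⟨ζ, hζ⟩ := IsCyclic.exists_generator (α := Kˣ)
    have hζ1 : ζ ^ (q - 1) = 1 := by
      have h1 : (ζ : K) ^ q = ζ := hall ζ
      have h2 : ζ ^ q = ζ := by ext; push_cast; exact h1
      have h3 : ζ ^ (q - 1) * ζ = ζ := by
        rw [← pow_succ, Nat.sub_add_cancel (by omega)]; exact h2
      exact mul_right_cancel (by rw [h3, one_mul])
    have hord : orderOf ζ = q ^ 2 - 1 := by
      rw [orderOf_eq_card_of_forall_mem_zpowers hζ, Nat.card_eq_fintype_card,
        Fintype.card_units, hK]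
    have hdvd : orderOf ζ ∣ q - 1 := orderOf_dvd_of_pow_eq_one hζ1
    rw [hord] at hdvd
    have hle := Nat.le_of_dvd (by omega) hdvd
    have hsq : q ^ 2 = q * q := sq q
    have : 2 * q ≤ q * q := Nat.mul_le_mul_right q hq2
    omega
  -- main injectivity argument
  have h1c : (1 : K) - c ≠ 0 := fun h0 => hc1 (by linear_combination -h0)
  apply Finite.injective_iff_bijective.mp
  intro x₁ x₂ hD0
  have hD : f (x₁ + γ) - c * f x₁ = f (x₂ + γ) - c * f x₂ := hD0
  have hDq : (f (x₁ + γ)) ^ q - c * (f x₁) ^ q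
      = (f (x₂ + γ)) ^ q - c * (f x₂) ^ q := by
    have h2 := congrArg (fun z : K => z ^ q) hD
    rwa [hsub, hsub, mul_pow, mul_pow, hc] at h2
  have h1 : ((f (x₁ + γ)) ^ q - f (x₁ + γ)) - c * ((f x₁) ^ q - f x₁)
      = ((f (x₂ + γ)) ^ q - f (x₂ + γ)) - c * ((f x₂) ^ q - f x₂) := by
    linear_combination hDq - hD
  rw [hE, hE, hE, hE] at h1
  rw [hadd x₁ γ, hadd x₂ γ] at h1
  have hfac : b * (a₀ - a₁) * (1 - c) * ((x₁ ^ q - x₁) - (x₂ ^ q - x₂)) = 0 := by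
    linear_combination h1
  have hy : x₁ ^ q - x₁ = x₂ ^ q - x₂ := by
    have := mul_eq_zero.mp hfac
    rcases this with h2 | h2
    · exact absurd h2 (mul_ne_zero (mul_ne_zero hb0 hdiff) h1c)
    · linear_combination h2
  -- equal g-terms
  have hg1 : g ((x₁ + γ) ^ q - (x₁ + γ)) = g ((x₂ + γ) ^ q - (x₂ + γ)) := by
    congr 1
    rw [hadd x₁ γ, hadd x₂ γ]
    linear_combination hy
  have hg2 : g (x₁ ^ q - x₁) = g (x₂ ^ q - x₂) := by rw [hy]
  rw [hf (x₁ + γ), hf (x₂ + γ), hf x₁, hf x₂, hg1, hg2] at hD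
  have hfin : b * (1 - c) * (a₀ * (x₁ - x₂) + a₁ * (x₁ ^ q - x₂ ^ q)) = 0 := by
    rw [hadd x₁ γ, hadd x₂ γ] at hD
    linear_combination hD
  have hfin2 : b * (1 - c) * (a₀ + a₁) * (x₁ - x₂) = 0 := by
    linear_combination hfin - b * (1 - c) * a₁ * hy
  rcases mul_eq_zero.mp hfin2 with h2 | h2
  · exact absurd h2 (mul_ne_zero (mul_ne_zero hb0 h1c) hsum)
  · linear_combination h2
end

section
/- Let m ≥ 1 and let n be an odd positive integer; set q = 2^m and let K be a finite field with q^n elements (characteristic 2). Let φ(x) = Σ_{i=0}^{n−1} a_i·x^{q^i} with all a_i ∈ F_q = {x ∈ K : x^q = x}. Assume that the restriction of φ to F_q is 2-to-1 (every element of F_q has exactly 0 or 2 preimages in F_q under φ) and that φ restricted to J = {x^q + x : x ∈ K} is a bijection of J. Let g : K → K be any function and b ∈ F_q, b ≠ 0, and define f₁(x) = b·φ(x) + Tr(g(x^q + x)) and f₂(x) = b·φ(x) + (g(x^q + x))^{(q^n−1)/(q−1)}, where Tr(y) = Σ_{i=0}^{n−1} y^{q^i}. Then for every c ∈ F_q with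 c ≠ 1, both f₁ and f₂ are APcN with respect to c: for all a, β ∈ K, each of the equations f₁(x+a) + c·f₁(x) = β and f₂(x+a) + c·f₂(x) = β has at most two solutions x ∈ K. -/
/-- Theorem 8 / AGW-type APcN maps in characteristic 2: with `q = 2^m`,
`n` odd, `K = F_{q^n}`, `φ` an `F_q`-linear polynomial with coefficients in `F_q` that
is 2-to-1 on `F_q` and permutes `J = {x^q + x}`, and `b ∈ F_q \ {0}`, both
`f₁(x) = b·φ(x) + Tr(g(x^q + x))` and `f₂(x) = b·φ(x) + g(x^q + x)^{(q^n−1)/(q−1)}`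
are APcN for every `c ∈ F_q`, `c ≠ 1`. -/
theorem stmt_10 (m n : ℕ) (hm : 1 ≤ m) (hn1 : 1 ≤ n) (hnodd : Odd n)
    (q : ℕ) (hq : q = 2 ^ m)
    (K : Type*) [Field K] [Fintype K] (hK : Fintype.card K = q ^ n)
    (co : Fin n → K) (hco : ∀ i, co i ^ q = co i)
    (φ : K → K) (hφ : ∀ x : K, φ x = ∑ i : Fin n, co i * x ^ q ^ (i : ℕ))
    (h2to1 : ∀ y : K, y ^ q = y →
      {x : K | x ^ q = x ∧ φ x = y}.ncard = 0 ∨ {x : K | x ^ q = x ∧ φ x = y}.ncard = 2)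
    (J : Set K) (hJ : J = {y : K | ∃ x : K, y = x ^ q + x})
    (hφJ : Set.BijOn φ J J)
    (g : K → K) (b : K) (hb : b ^ q = b) (hb0 : b ≠ 0)
    (f₁ f₂ : K → K)
    (hf₁ : ∀ x : K, f₁ x = b * φ x + ∑ i : Fin n, (g (x ^ q + x)) ^ q ^ (i : ℕ))
    (hf₂ : ∀ x : K, f₂ x = b * φ x + (g (x ^ q + x)) ^ ((q ^ n - 1) / (q - 1)))
    (c : K) (hc : c ^ q = c) (hc1 : c ≠ 1) :
    (∀ a β : K, {x : K | f₁ (x + a) + c * f₁ x = β}.ncard ≤ 2) ∧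
    (∀ a β : K, {x : K | f₂ (x + a) + c * f₂ x = β}.ncard ≤ 2) := by
  -- characteristic 2
  haveI hfact2 : Fact (Nat.Prime 2) := ⟨Nat.prime_two⟩
  haveI hchar2 : CharP K 2 := by
    obtain ⟨p, hp⟩ := CharP.exists K
    haveI := hp
    have hpprime : p.Prime := CharP.char_is_prime K p
    obtain ⟨k, hk⟩ := FiniteField.card K p
    have hdvd : p ∣ q ^ n := by rw [← hK, hk.2]; exact dvd_pow_self p k.2.ne'
    have hp2 : p = 2 := by
      rw [hq] at hdvd
      have h1 := hpprime.dvd_of_dvd_pow hdvd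
      have h2 := hpprime.dvd_of_dvd_pow h1
      exact (Nat.prime_dvd_prime_iff_eq hpprime Nat.prime_two).mp h2
    exact hp2 ▸ hp
  have hq0 : q ≠ 0 := by rw [hq]; positivity
  have hq1 : 2 ≤ q := by rw [hq]; exact Nat.one_lt_two_pow_iff.mpr (by omega)
  -- additive facts in char 2
  have h2 : ∀ x : K, x + x = 0 := fun x => CharTwo.add_self_eq_zero x
  -- q-th power is additive
  have hFadd : ∀ x y : K, (x + y) ^ q = x ^ q + y ^ q := by
    intro x y; rw [hq]; exact add_pow_char_pow x y 2 m
  -- Frobenius ring hom for sums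
  have hsum_pow : ∀ (s : Finset (Fin n)) (t : Fin n → K),
      (∑ i ∈ s, t i) ^ q = ∑ i ∈ s, (t i) ^ q := by
    intro s t
    simpa only [iterateFrobenius_def, hq] using map_sum (iterateFrobenius K 2 m) t s
  -- x ^ (q ^ n) = x
  have hcard : ∀ x : K, x ^ q ^ n = x := by
    intro x; rw [← hK]; exact FiniteField.pow_card x
  -- trace lands in F_q
  have htr : ∀ y : K, (∑ i : Fin n, y ^ q ^ (i : ℕ)) ^ q = ∑ i : Fin n, y ^ q ^ (i : ℕ) := by
    intro y
    rw [hsum_pow]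
    rw [Fin.sum_univ_eq_sum_range (fun i => (y ^ q ^ i) ^ q), Fin.sum_univ_eq_sum_range (fun i => y ^ q ^ i)]
    have hshift : ∀ i : ℕ, (y ^ q ^ i) ^ q = y ^ q ^ (i + 1) := by
      intro i; rw [← pow_mul, ← pow_succ]
    simp only [hshift]
    have e1 := Finset.sum_range_succ' (fun i => y ^ q ^ i) n
    have e2 := Finset.sum_range_succ (fun i => y ^ q ^ i) n
    have e3 : y ^ q ^ n = y ^ q ^ 0 := by rw [hcard]; simp
    rw [e2, e3] at e1
    exact add_right_cancel e1.symm
  -- the power map for f₂ lands in F_q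
  have hpe : ∀ y : K, (y ^ ((q ^ n - 1) / (q - 1))) ^ q = y ^ ((q ^ n - 1) / (q - 1)) := by
    intro y
    set e := (q ^ n - 1) / (q - 1) with he
    have hdvd : (q - 1) ∣ (q ^ n - 1) := by
      simpa using Nat.sub_dvd_pow_sub_pow q 1 n
    have hemul : e * (q - 1) = q ^ n - 1 := Nat.div_mul_cancel hdvd
    have hqn1 : 1 ≤ q ^ n := Nat.one_le_pow _ _ (by omega)
    have hqn2 : 2 ≤ q ^ n := by
      calc 2 ≤ q := hq1
      _ = q ^ 1 := (pow_one q).symm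
      _ ≤ q ^ n := Nat.pow_le_pow_right (by omega) hn1
    have he0 : e ≠ 0 := by
      intro h; rw [h, zero_mul] at hemul; omega
    rcases eq_or_ne y 0 with rfl | hy
    · rw [zero_pow he0, zero_pow hq0]
    · have h1 : y ^ (q ^ n - 1) = 1 := by
        rw [← hK]; exact FiniteField.pow_card_sub_one_eq_one y hy
      have : e * q = (q ^ n - 1) + e := by
        have hq' : q - 1 + 1 = q := by omega
        calc e * q = e * ((q - 1) + 1) := by rw [hq']
          _ = e * (q - 1) + e := by ring
          _ = (q ^ n - 1) + e := by rw [hemul]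
      rw [← pow_mul, this, pow_add, h1, one_mul]
  -- φ is additive
  have hφadd : ∀ x y : K, φ (x + y) = φ x + φ y := by
    intro x y
    simp only [hφ]
    rw [← Finset.sum_add_distrib]
    refine Finset.sum_congr rfl fun i _ => ?_
    rw [← mul_add]
    congr 1
    rw [hq, ← pow_mul]
    exact add_pow_char_pow x y 2 (m * (i:ℕ))
  have hφ0 : φ 0 = 0 := by
    simp [hφ, zero_pow (pow_ne_zero _ hq0)]
  -- φ commutes with the q-power map
  have hφq : ∀ x : K, (φ x) ^ q = φ (x ^ q) := by
    intro x
    rw [hφ, hφ, hsum_pow]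
    refine Finset.sum_congr rfl fun i _ => ?_
    rw [mul_pow, hco, ← pow_mul, ← pow_mul, mul_comm (q ^ (i:ℕ)) q]
  -- kernel of φ on F_q has exactly two elements
  have hS : {x : K | x ^ q = x ∧ φ x = 0}.ncard = 2 := by
    rcases h2to1 0 (by rw [zero_pow hq0]) with h | h
    · exfalso
      have h0 : (0 : K) ∈ {x : K | x ^ q = x ∧ φ x = 0} := ⟨by rw [zero_pow hq0], hφ0⟩
      have := Set.ncard_eq_zero (Set.toFinite _) |>.mp h
      rw [this] at h0
      exact h0
    · exact h
  -- main abstract lemma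
  have main : ∀ (h : K → K), (∀ x, (h x) ^ q = h x) →
      (∀ x y : K, x ^ q + x = y ^ q + y → h x = h y) →
      ∀ (f : K → K), (∀ x, f x = b * φ x + h x) →
      ∀ a β : K, {x : K | f (x + a) + c * f x = β}.ncard ≤ 2 := by
    intro h hhF hhψ f hf a β
    set T := {x : K | f (x + a) + c * f x = β} with hT
    rcases T.eq_empty_or_nonempty with hTe | ⟨x₀, hx₀⟩
    · rw [hTe]; simp
    -- key: differences of solutions lie in the kernel of φ on F_q
    have key : ∀ x ∈ T, x + x₀ ∈ {z : K | z ^ q = z ∧ φ z = 0} := by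
      intro x hx
      set d := x + x₀ with hd
      have E1 : b * φ (x + a) + h (x + a) + c * (b * φ x + h x) = β := by
        have := hx; rw [hT] at this; rw [← hf, ← hf]; exact this
      have E0 : b * φ (x₀ + a) + h (x₀ + a) + c * (b * φ x₀ + h x₀) = β := by
        have := hx₀; rw [hT] at this; rw [← hf, ← hf]; exact this
      set u := (h (x + a) + h (x₀ + a)) + c * (h x + h x₀) with hu
      set v := b * (1 + c) with hv
      have hv0 : v ≠ 0 := by
        rw [hv]
        refine mul_ne_zero hb0 fun hcon => ?_
        apply hc1
        have : c = c + (1 + c) := by rw [hcon, add_zero]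
        calc c = c + (1 + c) := this
        _ = 1 + (c + c) := by ring
        _ = 1 := by rw [h2, add_zero]
      have hvF : v ^ q = v := by
        rw [hv, mul_pow, hb, hFadd, one_pow, hc]
      have hE : v * φ d + u = 0 := by
        have hsum : (b * φ (x + a) + h (x + a) + c * (b * φ x + h x))
            + (b * φ (x₀ + a) + h (x₀ + a) + c * (b * φ x₀ + h x₀)) = β + β := by
          rw [E1, E0]
        rw [h2] at hsum
        have hφd : φ (x + a) + φ (x₀ + a) = φ d := by
          rw [hφadd, hφadd, hd, hφadd]
          have : φ x + φ a + (φ x₀ + φ a) = φ x + φ x₀ + (φ a + φ a) := by ring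
          rw [this, h2, add_zero]
        have hφd2 : φ x + φ x₀ = φ d := by rw [hd, hφadd]
        calc v * φ d + u
            = b * (φ (x + a) + φ (x₀ + a)) + c * b * (φ x + φ x₀) + u := by
              rw [hφd, hφd2, hv]; ring
          _ = (b * φ (x + a) + h (x + a) + c * (b * φ x + h x))
            + (b * φ (x₀ + a) + h (x₀ + a) + c * (b * φ x₀ + h x₀)) := by rw [hu]; ring
          _ = 0 := hsum
      have hEq : v * φ d = u := by
        have : v * φ d = v * φ d + (u + u) := by rw [h2, add_zero]
        rw [this, ← add_assoc, hE, zero_add]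
      -- u lies in F_q
      have huF : u ^ q = u := by
        rw [hu, hFadd, hFadd, mul_pow, hc, hFadd, hhF, hhF, hhF, hhF]
      -- hence φ d lies in F_q
      have hφdF : (φ d) ^ q = φ d := by
        have : φ d = u * v⁻¹ := by
          field_simp at hEq ⊢
          rw [mul_comm] at hEq
          rw [mul_comm]; exact hEq
        rw [this, mul_pow, inv_pow, hvF, huF]
      -- φ (ψ d) = 0 and so ψ d = 0
      have hψd : d ^ q + d = 0 := by
        have hm1 : φ (d ^ q + d) = 0 := by
          rw [hφadd, ← hφq, hφdF, h2]
        have hmem : d ^ q + d ∈ J := by rw [hJ]; exact ⟨d, rfl⟩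
        have hmem0 : (0 : K) ∈ J := by
          rw [hJ]; exact ⟨0, by rw [zero_pow hq0, add_zero]⟩
        have := hφJ.injOn hmem hmem0 (by rw [hm1, hφ0])
        exact this
      have hdF : d ^ q = d := by
        have : d ^ q + (d + d) = 0 + d := by rw [← add_assoc, hψd, zero_add]
        rw [h2, add_zero, zero_add] at this
        exact this
      -- now the h-terms cancel
      have hx0x : x₀ = x + d := by
        rw [hd, ← add_assoc, h2, zero_add]
      have hps : ∀ z : K, (z + d) ^ q + (z + d) = z ^ q + z := by
        intro z
        rw [hFadd, hdF]
        have : z ^ q + d + (z + d) = z ^ q + z + (d + d) := by ring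
        rw [this, h2, add_zero]
      have hh1 : h (x₀ + a) = h (x + a) := by
        apply hhψ
        have : x₀ + a = (x + a) + d := by rw [hx0x]; ring
        rw [this, hps]
      have hh2 : h x₀ = h x := by
        apply hhψ; rw [hx0x, hps]
      have hu0 : u = 0 := by
        rw [hu, hh1, hh2, h2, h2, mul_zero, add_zero]
      have hφd0 : φ d = 0 := by
        have := hEq
        rw [hu0] at this
        exact (mul_eq_zero.mp this).resolve_left hv0
      exact ⟨hdF, hφd0⟩
    -- conclude: T injects into the kernel
    have himg : (fun z => z + x₀) '' T ⊆ {z : K | z ^ q = z ∧ φ z = 0} := by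
      rintro _ ⟨x, hx, rfl⟩
      exact key x hx
    calc T.ncard = ((fun z => z + x₀) '' T).ncard :=
          (Set.ncard_image_of_injective T (add_left_injective x₀)).symm
      _ ≤ {z : K | z ^ q = z ∧ φ z = 0}.ncard :=
          Set.ncard_le_ncard himg (Set.toFinite _)
      _ = 2 := hS
  constructor
  · intro a β
    exact main (fun x => ∑ i : Fin n, (g (x ^ q + x)) ^ q ^ (i : ℕ))
      (fun x => htr _) (fun x y hxy => by simp only [hxy]) f₁ hf₁ a β
  · intro a β
    exact main (fun x => (g (x ^ q + x)) ^ ((q ^ n - 1) / (q - 1)))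
      (fun x => hpe _) (fun x y hxy => by simp only [hxy]) f₂ hf₂ a β
end

section
/- Let K be a finite field with q elements, let c ∈ K with c ≠ 1, and let d ≥ 1 be an integer. If the power map f(x) = x^d is APcN with respect to c over K (i.e., for all a, b ∈ K with (a,c) ≠ (0,1), the equation (x+a)^d − c·x^d = b has at most two solutions x ∈ K), then gcd(d, q−1) ≤ 2. -/
/-- if the power map `x ↦ x^d` over a finite field with `q` elements is
APcN with respect to some `c ≠ 1`, then `gcd(d, q − 1) ≤ 2`. -/
theorem stmt_12 (K : Type*) [Field K] [Fintype K] (q : ℕ) (hq : Fintype.card K = q)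
    (c : K) (hc : c ≠ 1) (d : ℕ) (hd : 1 ≤ d)
    (hAPcN : ∀ a b : K, ¬(a = 0 ∧ c = 1) →
      {x : K | (x + a) ^ d - c * x ^ d = b}.ncard ≤ 2) :
    Nat.gcd d (q - 1) ≤ 2 := by
  subst hq
  set n := Fintype.card K - 1 with hn
  set g := Nat.gcd d n with hg
  classical
  by_contra hle
  push_neg at hle
  have hn0 : n ≠ 0 := by
    have : 1 < Fintype.card K := Fintype.one_lt_card
    omega
  have hgdvd : g ∣ n := Nat.gcd_dvd_right _ _
  have hgd : g ∣ d := Nat.gcd_dvd_left _ _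
  -- get an element of order g in Kˣ
  obtain ⟨u, hu⟩ := IsCyclic.exists_ofOrder_eq_natCard (α := Kˣ)
  have hcard : Nat.card Kˣ = n := by
    rw [Nat.card_eq_fintype_card, Fintype.card_units, hn]
  set ζ : Kˣ := u ^ (n / g) with hζdef
  have hord : orderOf ζ = g := by
    rw [hζdef, orderOf_pow, hu, hcard,
      Nat.gcd_eq_right (Nat.div_dvd_of_dvd hgdvd), Nat.div_div_self hgdvd hn0]
  have hζd : ζ ^ d = 1 := by
    rw [← orderOf_dvd_iff_pow_eq_one, hord]; exact hgd
  -- the solution set of x^d = 1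
  have key := hAPcN 0 (1 - c) (by simp [hc])
  have hset : {x : K | (x + 0) ^ d - c * x ^ d = 1 - c} = {x : K | x ^ d = 1} := by
    ext x
    simp only [Set.mem_setOf_eq, add_zero]
    constructor
    · intro h
      have h2 : (1 - c) * (x ^ d - 1) = 0 := by linear_combination h
      have hne : 1 - c ≠ 0 := sub_ne_zero.mpr (Ne.symm hc)
      rcases mul_eq_zero.mp h2 with h' | h'
      · exact absurd h' hne
      · exact sub_eq_zero.mp h'
    · intro h; rw [h]; ring
  rw [hset] at key
  -- 1, ζ, ζ^2 are three distinct elements of the set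
  have hζ1 : (ζ : Kˣ) ≠ 1 := by
    intro h
    rw [h, orderOf_one] at hord
    omega
  have hζ2 : ζ ^ 2 ≠ 1 := by
    intro h
    have := orderOf_dvd_of_pow_eq_one h
    rw [hord] at this
    have := Nat.le_of_dvd (by norm_num) this
    omega
  have hζ21 : ζ ^ 2 ≠ ζ := by
    intro h
    have h' : ζ * ζ = ζ * 1 := by rw [mul_one, ← sq, h]
    exact hζ1 (mul_left_cancel h')
  have hsub : ({1, (ζ : K), ((ζ : K))^2} : Set K) ⊆ {x : K | x ^ d = 1} := by
    intro x hx
    rcases hx with h | h | h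
    · simp [h]
    · subst h
      have : (ζ : K) ^ d = ((ζ ^ d : Kˣ) : K) := by push_cast [Units.val_pow_eq_pow_val]; ring
      simp [Set.mem_setOf_eq, this, hζd]
    · simp only [Set.mem_singleton_iff] at h
      subst h
      have : ((ζ : K) ^ 2) ^ d = (((ζ ^ 2) ^ d : Kˣ) : K) := by
        push_cast [Units.val_pow_eq_pow_val]; ring
      rw [Set.mem_setOf_eq, this, ← pow_mul, mul_comm, pow_mul, hζd, one_pow, Units.val_one]
  have hcard3 : ({1, (ζ : K), ((ζ : K))^2} : Set K).ncard = 3 := by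
    rw [Set.ncard_eq_three]
    refine ⟨1, (ζ : K), ((ζ : K))^2, ?_, ?_, ?_, rfl⟩
    · intro h; exact hζ1 (Units.ext h.symm)
    · intro h
      apply hζ2
      apply Units.ext
      push_cast
      exact h.symm
    · intro h
      apply hζ21
      apply Units.ext
      push_cast
      exact h.symm
  have := Set.ncard_le_ncard hsub (Set.toFinite _)
  omega
end

section
/- Let p be a prime and d ≥ 2 an integer with p ∤ d(d−1); let s be the least positive integer such that (d−1) | (p^s − 1). Let F be an algebraic closure of F_p and let c ∈ F be such that every c₀ ∈ F with c₀^{d−1} = c satisfies c₀^{p^s} ≠ c₀. Let D_c(X,Y) = (X+1)^d − (Y+1)^d − c·(X^d − Y^d) ∈ F[X,Y]. Then D_c has no singular points off the line X = Y: there is no pair (x₀, y₀) ∈ F² with x₀ ≠ y₀ such that D_c(x₀,y₀) = 0 and both partial derivatives of D_c vanish at (x₀,y₀) (equivalently, since p ∤ d, such that D_c(x₀,y₀) = 0, (x₀+1)^{d−1} = c·x₀^{d−1}, and (y₀+1)^{d−1} = c·y₀^{d−1}). -/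
open MvPolynomial in
/-- Theorem 6: if no `(d−1)`-th root of `c` lies in `F_{p^s}`, then the
curve `D_c : (X+1)^d − (Y+1)^d − c(X^d − Y^d) = 0` over an algebraic closure `F` of
`F_p` has no singular points off the line `X = Y`. -/
theorem stmt_13 (p : ℕ) [Fact p.Prime] (d : ℕ) (hd : 2 ≤ d) (hpd : ¬ p ∣ d * (d - 1))
    (s : ℕ) (hs : IsLeast {s' : ℕ | 0 < s' ∧ (d - 1) ∣ (p ^ s' - 1)} s)
    (F : Type*) [Field F] [Algebra (ZMod p) F] [IsAlgClosure (ZMod p) F]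
    (c : F) (hc : ∀ c₀ : F, c₀ ^ (d - 1) = c → c₀ ^ p ^ s ≠ c₀)
    (D : MvPolynomial (Fin 2) F)
    (hD : D = (X 0 + 1) ^ d - (X 1 + 1) ^ d - C c * ((X 0) ^ d - (X 1) ^ d)) :
    ¬ ∃ x y : F, x ≠ y ∧ eval ![x, y] D = 0 ∧
      eval ![x, y] (pderiv 0 D) = 0 ∧ eval ![x, y] (pderiv 1 D) = 0 := by
  haveI : CharP F p := charP_of_injective_algebraMap (algebraMap (ZMod p) F).injective p
  rintro ⟨x, y, hxy, h0, h1, h2⟩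
  subst hD
  have e1 : (d : F) * (x+1)^(d-1) - c * (d * x^(d-1)) = 0 := by
    simpa [pderiv_pow] using h1
  have e2 : -((d : F) * (y+1)^(d-1)) - c * (-(d * y^(d-1))) = 0 := by
    simpa [pderiv_pow] using h2
  have e0 : (x+1)^d - (y+1)^d - c * (x^d - y^d) = 0 := by
    simpa using h0
  have hpdn : ¬ p ∣ d := fun h => hpd (h.mul_right _)
  have hdF : (d : F) ≠ 0 := by
    simpa [CharP.cast_eq_zero_iff F p] using hpdn
  have k1 : (x+1)^(d-1) = c * x^(d-1) := by
    have h : (d : F) * ((x+1)^(d-1) - c * x^(d-1)) = 0 := by linear_combination e1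
    exact sub_eq_zero.mp ((mul_eq_zero.mp h).resolve_left hdF)
  have k2 : (y+1)^(d-1) = c * y^(d-1) := by
    have h : (d : F) * ((y+1)^(d-1) - c * y^(d-1)) = 0 := by linear_combination -e2
    exact sub_eq_zero.mp ((mul_eq_zero.mp h).resolve_left hdF)
  have hd1 : d - 1 ≠ 0 := by omega
  have hps : p ^ s ≠ 0 := pow_ne_zero _ (Fact.out : p.Prime).ne_zero
  have hc0 : c ≠ 0 := by
    intro h
    exact hc 0 (by simp [h, zero_pow hd1]) (by simp [zero_pow hps])
  have hx0 : x ≠ 0 := by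
    rintro rfl; simp [zero_pow hd1] at k1
  have hy0 : y ≠ 0 := by
    rintro rfl; simp [zero_pow hd1] at k2
  have hx1 : x + 1 ≠ 0 := by
    intro h
    rw [h, zero_pow hd1] at k1
    exact hx0 (pow_eq_zero_iff hd1 |>.mp ((mul_eq_zero.mp k1.symm).resolve_left hc0))
  have hy1 : y + 1 ≠ 0 := by
    intro h
    rw [h, zero_pow hd1] at k2
    exact hy0 (pow_eq_zero_iff hd1 |>.mp ((mul_eq_zero.mp k2.symm).resolve_left hc0))
  have hdd : d = (d - 1) + 1 := by omega
  have hx : (x+1)^(d-1) * (x+1) = (x+1)^d := by rw [← pow_succ, ← hdd]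
  have hy : (y+1)^(d-1) * (y+1) = (y+1)^d := by rw [← pow_succ, ← hdd]
  have hxd : x^(d-1) * x = x^d := by rw [← pow_succ, ← hdd]
  have hyd : y^(d-1) * y = y^d := by rw [← pow_succ, ← hdd]
  have A : (x+1)^d = c * x^d + c * x^(d-1) := by
    rw [← hx, k1, ← hxd]; ring
  have B : (y+1)^d = c * y^d + c * y^(d-1) := by
    rw [← hy, k2, ← hyd]; ring
  have e0' : c * (x^(d-1) - y^(d-1)) = 0 := by
    linear_combination e0 - A + B
  have key : x^(d-1) = y^(d-1) := sub_eq_zero.mp ((mul_eq_zero.mp e0').resolve_left hc0)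
  have key2 : (x+1)^(d-1) = (y+1)^(d-1) := by rw [k1, k2, key]
  -- (d-1)-th roots of unity are fixed by Frobenius^s
  have fix : ∀ u v : F, v ≠ 0 → u^(d-1) = v^(d-1) → u^(p^s) * v = u * v^(p^s) := by
    intro u v hv huv
    have hu : (u * v⁻¹) ^ (d-1) = 1 := by
      rw [mul_pow, huv, inv_pow, mul_inv_cancel₀ (pow_ne_zero _ hv)]
    obtain ⟨k, hk⟩ := hs.1.2
    have hps1 : 1 ≤ p ^ s := Nat.one_le_pow _ _ (Fact.out : p.Prime).pos
    have h1 : (u * v⁻¹) ^ (p^s - 1) = 1 := by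
      rw [hk, pow_mul, hu, one_pow]
    have h2 : (u * v⁻¹) ^ (p^s) = u * v⁻¹ := by
      have : p ^ s = (p ^ s - 1) + 1 := by omega
      rw [this, pow_succ, h1, one_mul]
    have := h2
    rw [mul_pow, inv_pow] at this
    field_simp at this
    linear_combination this
  have fy : x^(p^s) * y = x * y^(p^s) := fix x y hy0 key
  have fy1 : (x+1)^(p^s) * (y+1) = (x+1) * (y+1)^(p^s) := fix (x+1) (y+1) hy1 key2
  have frobx : (x+1)^(p^s) = x^(p^s) + 1 := by
    simpa using add_pow_char_pow x (1:F) p s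
  have froby : (y+1)^(p^s) = y^(p^s) + 1 := by
    simpa using add_pow_char_pow y (1:F) p s
  rw [frobx, froby] at fy1
  -- deduce y^(p^s) = y and x^(p^s) = x
  have hyy : y^(p^s) = y := by
    have h : (x - y) * (y - y^(p^s)) = 0 := by linear_combination (1+y) * fy - y * fy1
    have := (mul_eq_zero.mp h).resolve_left (sub_ne_zero.mpr hxy)
    linear_combination -this
  have hxx : x^(p^s) = x := by
    have h : (x^(p^s) - x) * y = 0 := by rw [hyy] at fy; linear_combination fy
    have := (mul_eq_zero.mp h).resolve_right hy0
    linear_combination this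
  -- contradiction with hc
  refine hc ((x+1) * x⁻¹) ?_ ?_
  · rw [mul_pow, inv_pow, k1, key, ← key, mul_assoc,
      mul_inv_cancel₀ (pow_ne_zero _ hx0), mul_one]
  · rw [mul_pow, inv_pow, frobx, hxx]
end

section
/- Let p be a prime and d ≥ 2 an integer with p ∤ d(d−1); let s be the least positive integer such that (d−1) | (p^s − 1). Let F be an algebraic closure of F_p and let c ∈ F be such that every c₀ ∈ F with c₀^{d−1} = c satisfies c₀^{p^s} ≠ c₀. Let Q ∈ F[X,Y] be the polynomial with (X − Y)·Q(X,Y) = (X+1)^d − (Y+1)^d − c·(X^d − Y^d). Then the affine curve Q = 0 has no singular points: there is no point (x₀, y₀) ∈ F² such that Q(x₀,y₀) = 0 and both partial derivatives of Q vanish at (x₀,y₀). -/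
open MvPolynomial in
/-- under the hypotheses of Theorem 6, the curve `C_{f,c} : Q = 0`, where
`(X − Y)·Q = (X+1)^d − (Y+1)^d − c(X^d − Y^d)`, has no singular points at all. -/
theorem stmt_14 (p : ℕ) [Fact p.Prime] (d : ℕ) (hd : 2 ≤ d) (hpd : ¬ p ∣ d * (d - 1))
    (s : ℕ) (hs : IsLeast {s' : ℕ | 0 < s' ∧ (d - 1) ∣ (p ^ s' - 1)} s)
    (F : Type*) [Field F] [Algebra (ZMod p) F] [IsAlgClosure (ZMod p) F]
    (c : F) (hc : ∀ c₀ : F, c₀ ^ (d - 1) = c → c₀ ^ p ^ s ≠ c₀)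
    (Q : MvPolynomial (Fin 2) F)
    (hQ : (X 0 - X 1) * Q
      = (X 0 + 1) ^ d - (X 1 + 1) ^ d - C c * ((X 0) ^ d - (X 1) ^ d)) :
    ¬ ∃ x y : F, eval ![x, y] Q = 0 ∧
      eval ![x, y] (pderiv 0 Q) = 0 ∧ eval ![x, y] (pderiv 1 Q) = 0 := by
  rintro ⟨x, y, h0, hx, hy⟩
  obtain ⟨m, rfl⟩ : ∃ m, d = m + 2 := ⟨d - 2, by omega⟩
  have hp := Fact.out (p := p.Prime)
  haveI hchar : CharP F p := charP_of_injective_algebraMap (algebraMap (ZMod p) F).injective p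
  have h1 := congrArg (eval ![x, y]) hQ
  have h2 := congrArg (eval ![x, y]) (congrArg (pderiv 0) hQ)
  have h3 := congrArg (eval ![x, y]) (congrArg (pderiv 1) hQ)
  have h4 := congrArg (eval ![x, y]) (congrArg (pderiv 0) (congrArg (pderiv 0) hQ))
  have hp2 : pderiv (0 : Fin 2) (2 : MvPolynomial (Fin 2) F) = 0 := by
    rw [show (2 : MvPolynomial (Fin 2) F) = C 2 from (map_ofNat C 2).symm, pderiv_C]
  simp [Derivation.leibniz_pow, Derivation.leibniz, smul_eq_mul, hp2] at h1 h2 h3 h4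
  simp only [show m + 2 - 1 = m + 1 from by omega, show m + 2 - 1 - 1 = m from by omega]
    at h1 h2 h3 h4 hc hs
  -- cast facts
  have hpd1 : ¬ p ∣ (m + 2) := fun h => hpd (h.mul_right _)
  have hpd2 : ¬ p ∣ (m + 1) := fun h => hpd (by
    have : m + 2 - 1 = m + 1 := by omega
    rw [this]; exact h.mul_left _)
  have hdF : ((m : F) + 2) ≠ 0 := by
    rw [show ((m:F) + 2) = ((m+2 : ℕ) : F) by push_cast; ring, Ne, CharP.cast_eq_zero_iff F p]; exact hpd1
  have hd1F : ((m : F) + 1) ≠ 0 := by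
    rw [show ((m:F) + 1) = ((m+1 : ℕ) : F) by push_cast; ring, Ne, CharP.cast_eq_zero_iff F p]; exact hpd2
  -- basic equations
  have e1 : (x+1)^(m+2) - (y+1)^(m+2) - c*(x^(m+2) - y^(m+2)) = 0 := by
    linear_combination (x - y) * h0 - h1
  have e2 : ((m:F)+2) * ((x+1)^(m+1) - c * x^(m+1)) = 0 := by
    linear_combination (x - y) * hx + h0 - h2
  have e3 : ((m:F)+2) * ((y+1)^(m+1) - c * y^(m+1)) = 0 := by
    linear_combination h3 - (x - y) * hy + h0
  have e2' : (x+1)^(m+1) = c * x^(m+1) :=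
    sub_eq_zero.mp ((mul_eq_zero.mp e2).resolve_left hdF)
  have e3' : (y+1)^(m+1) = c * y^(m+1) :=
    sub_eq_zero.mp ((mul_eq_zero.mp e3).resolve_left hdF)
  have hps0 : p ^ s ≠ 0 := pow_ne_zero _ hp.pos.ne'
  have hc0 : c ≠ 0 := by
    rintro rfl
    exact hc 0 (zero_pow (by omega)) (zero_pow hps0)
  have hx0 : x ≠ 0 := by
    rintro rfl
    rw [zero_pow (by omega : m + 1 ≠ 0), mul_zero, zero_add, one_pow] at e2'
    exact one_ne_zero e2'
  have hy0 : y ≠ 0 := by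
    rintro rfl
    rw [zero_pow (by omega : m + 1 ≠ 0), mul_zero, zero_add, one_pow] at e3'
    exact one_ne_zero e3'
  by_cases hxy : x = y
  · -- diagonal case
    subst hxy
    have e4 : ((m:F)+2) * (((m:F)+1) * ((x+1)^m - c * x^m)) = 0 := by
      linear_combination 2 * hx - h4
    have e4' : (x+1)^m = c * x^m :=
      sub_eq_zero.mp ((mul_eq_zero.mp ((mul_eq_zero.mp e4).resolve_left hdF)).resolve_left hd1F)
    have hz : c * x^m = 0 := by linear_combination e2' - (x+1) * e4'
    exact mul_ne_zero hc0 (pow_ne_zero _ hx0) hz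
  · -- off-diagonal case
    have h5 : c * x^(m+1) = c * y^(m+1) := by
      linear_combination (y+1) * e3' - (x+1) * e2' + e1
    have hP : x^(m+1) = y^(m+1) := mul_left_cancel₀ hc0 h5
    have hR : (x+1)^(m+1) = (y+1)^(m+1) := by rw [e2', h5, ← e3']
    obtain ⟨hspos, k, hk⟩ := hs.1
    have hq : p ^ s = (m+1) * k + 1 := by
      have h1p : 1 ≤ p ^ s := Nat.one_le_pow _ _ hp.pos
      omega
    have hxq : x ^ p ^ s = (x^(m+1))^k * x := by rw [hq, pow_succ, pow_mul]
    have hyq : y ^ p ^ s = (x^(m+1))^k * y := by rw [hq, pow_succ, pow_mul, ← hP]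
    have hAq : (x+1) ^ p ^ s = ((x+1)^(m+1))^k * (x+1) := by rw [hq, pow_succ, pow_mul]
    have hBq : (y+1) ^ p ^ s = ((x+1)^(m+1))^k * (y+1) := by
      rw [hq, pow_succ, pow_mul, ← hR]
    have hfrob : ∀ a : F, (a + 1) ^ p ^ s = a ^ p ^ s + 1 := fun a => by
      rw [add_pow_char_pow, one_pow]
    have EA : ((x+1)^(m+1))^k * (x+1) = (x^(m+1))^k * x + 1 := by
      rw [← hAq, hfrob x, hxq]
    have EB : ((x+1)^(m+1))^k * (y+1) = (x^(m+1))^k * y + 1 := by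
      rw [← hBq, hfrob y, hyq]
    have hRP : (((x+1)^(m+1))^k - (x^(m+1))^k) * (x - y) = 0 := by
      linear_combination EA - EB
    have hRP' : ((x+1)^(m+1))^k = (x^(m+1))^k :=
      sub_eq_zero.mp ((mul_eq_zero.mp hRP).resolve_right (sub_ne_zero.mpr hxy))
    have hP1 : (x^(m+1))^k = 1 := by linear_combination EA - (x+1) * hRP'
    have hxfix : x ^ p ^ s = x := by rw [hxq, hP1, one_mul]
    have hu : ((x+1)/x)^(m+1) = c := by
      rw [div_pow, div_eq_iff (pow_ne_zero _ hx0)]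
      linear_combination e2'
    apply hc _ hu
    rw [div_pow, hfrob x, hxfix]
end

section
/- Let p be a prime and d ≥ 2 an integer with p ∤ d(d−1); let s be the least positive integer such that (d−1) | (p^s − 1). Let F be an algebraic closure of F_p and let c ∈ F be such that every c₀ ∈ F with c₀^{d−1} = c satisfies c₀^{p^s} ≠ c₀. Suppose x₀ ∈ F satisfies (x₀+1)^{d−1} = c·x₀^{d−1}, and set t₀ = (x₀+1)^d − c·x₀^d. Then the polynomial P₀(x) = (x+1)^d − c·x^d − t₀ ∈ F[x] has x₀ as a root of multiplicity exactly 2, and every other root of P₀ is simple; in particular, P₀ has exactly d−1 distinct roots in F. -/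
open Polynomial

/-- for `x₀` with `(x₀+1)^{d−1} = c·x₀^{d−1}` and
`t₀ = (x₀+1)^d − c·x₀^d`, the polynomial `P₀(x) = (x+1)^d − c·x^d − t₀` has `x₀` as a
root of multiplicity exactly 2, all other roots simple, and exactly `d − 1` distinct
roots in the algebraic closure `F` of `F_p`. -/
theorem stmt_16 (p : ℕ) [Fact p.Prime] (d : ℕ) (hd : 2 ≤ d) (hpd : ¬ p ∣ d * (d - 1))
    (s : ℕ) (hs : IsLeast {s' : ℕ | 0 < s' ∧ (d - 1) ∣ (p ^ s' - 1)} s)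
    (F : Type*) [Field F] [Algebra (ZMod p) F] [IsAlgClosure (ZMod p) F]
    (c : F) (hc : ∀ c₀ : F, c₀ ^ (d - 1) = c → c₀ ^ p ^ s ≠ c₀)
    (x₀ : F) (hx₀ : (x₀ + 1) ^ (d - 1) = c * x₀ ^ (d - 1))
    (t₀ : F) (ht₀ : t₀ = (x₀ + 1) ^ d - c * x₀ ^ d)
    (P₀ : Polynomial F)
    (hP₀ : P₀ = (Polynomial.X + Polynomial.C 1) ^ d - Polynomial.C c * Polynomial.X ^ d
      - Polynomial.C t₀) :
    Polynomial.rootMultiplicity x₀ P₀ = 2 ∧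
    (∀ y : F, P₀.IsRoot y → y ≠ x₀ → Polynomial.rootMultiplicity y P₀ = 1) ∧
    {y : F | P₀.IsRoot y}.ncard = d - 1 := by
  classical
  haveI : IsAlgClosed F := IsAlgClosure.isAlgClosed (ZMod p)
  haveI : CharP F p := charP_of_injective_algebraMap (algebraMap (ZMod p) F).injective p
  haveI : ExpChar F p := .prime Fact.out
  obtain ⟨f, rfl⟩ : ∃ f, d = f + 2 := ⟨d - 2, by omega⟩
  simp only [show f + 2 - 1 = f + 1 from rfl] at hx₀ hc hs hpd ⊢
  have hppos : 0 < p := (Fact.out : p.Prime).pos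
  have hqpos : 0 < p ^ s := Nat.pow_pos hppos
  -- basic nonvanishing facts
  have hc0 : c ≠ 0 := by
    intro h
    exact hc 0 (by rw [zero_pow (by omega : f + 1 ≠ 0), h])
      (by rw [zero_pow (by omega : p ^ s ≠ 0)])
  have hc1 : c ≠ 1 := by
    intro h
    exact hc 1 (by rw [one_pow, h]) (by rw [one_pow])
  have hx0 : x₀ ≠ 0 := by
    intro h
    rw [h, zero_add, one_pow, zero_pow (by omega : f + 1 ≠ 0), mul_zero] at hx₀
    exact one_ne_zero hx₀
  have hx1 : x₀ + 1 ≠ 0 := by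
    intro h
    rw [h, zero_pow (by omega : f + 1 ≠ 0)] at hx₀
    exact hc0 (by
      rcases mul_eq_zero.mp hx₀.symm with h' | h'
      · exact h'
      · exact absurd ((pow_eq_zero_iff (by omega : f + 1 ≠ 0)).mp h') hx0)
  -- roots of unity of order dividing d-1 are fixed by z ↦ z^{p^s}
  have hcycl : ∀ z : F, z ^ (f + 1) = 1 → z ^ p ^ s = z := by
    intro z hz
    obtain ⟨k, hk⟩ := hs.1.2
    have hps : p ^ s = (f + 1) * k + 1 := by omega
    rw [hps, pow_add, pow_mul, hz, one_pow, pow_one, one_mul]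
  -- key uniqueness
  have hkey : ∀ y : F, (y + 1) ^ (f + 1) = c * y ^ (f + 1) →
      y ^ (f + 1) = x₀ ^ (f + 1) → y = x₀ := by
    intro y hy hyx
    by_contra hne
    have hζ : ((y + 1) / (x₀ + 1)) ^ (f + 1) = 1 := by
      rw [div_pow, hy, hx₀, hyx, div_self (mul_ne_zero hc0 (pow_ne_zero _ hx0))]
    have hη : (y / x₀) ^ (f + 1) = 1 := by
      rw [div_pow, hyx, div_self (pow_ne_zero _ hx0)]
    set ζ := (y + 1) / (x₀ + 1) with hζdef
    set η := y / x₀ with hηdef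
    have h1 : ζ * (x₀ + 1) = y + 1 := div_mul_cancel₀ _ hx1
    have h2 : η * x₀ = y := div_mul_cancel₀ _ hx0
    have hζη : ζ ≠ η := by
      intro h
      apply hne
      rw [h] at h1
      have : η * x₀ + η = y + 1 := by linear_combination h1
      rw [h2] at this
      have hη1 : η = 1 := by linear_combination this
      rw [hη1, one_mul] at h2
      exact h2.symm
    have hsub : ζ - η ≠ 0 := sub_ne_zero_of_ne hζη
    have hx₀eq : x₀ = (1 - ζ) / (ζ - η) := by
      rw [eq_div_iff hsub]
      linear_combination h1 - h2
    have hx₀fix : x₀ ^ p ^ s = x₀ := by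
      rw [hx₀eq, div_pow, sub_pow_char_pow, sub_pow_char_pow, one_pow,
        hcycl ζ hζ, hcycl η hη]
    have hc₀ : ((x₀ + 1) / x₀) ^ (f + 1) = c := by
      rw [div_pow, hx₀, mul_div_assoc, div_self (pow_ne_zero _ hx0), mul_one]
    exact hc _ hc₀ (by rw [div_pow, add_pow_char_pow, one_pow, hx₀fix])
  -- cast nonvanishing
  have hdF : ((f + 2 : ℕ) : F) ≠ 0 := by
    rw [Ne, CharP.cast_eq_zero_iff F p]
    intro h
    exact hpd (Dvd.dvd.mul_right h _)
  have hfF : ((f + 1 : ℕ) : F) ≠ 0 := by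
    rw [Ne, CharP.cast_eq_zero_iff F p]
    intro h
    exact hpd (Dvd.dvd.mul_left h _)
  -- the auxiliary polynomial G
  set G : F[X] := (X + C 1) ^ (f + 1) - C c * X ^ (f + 1) with hGdef
  have hC1 : (C 1 : F[X]) = 1 := map_one C
  have hGne : G ≠ 0 := by
    intro h
    have := congrArg (fun P : F[X] => P.coeff (f + 1)) h
    simp only [hGdef, hC1, coeff_sub, coeff_X_add_one_pow, Nat.choose_self, Nat.cast_one,
      coeff_C_mul, coeff_X_pow, if_true, mul_one, coeff_zero] at this
    exact hc1 (by linear_combination -this)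
  have hP0ne : P₀ ≠ 0 := by
    intro h
    have := congrArg (fun P : F[X] => P.coeff (f + 2)) h
    simp only [hP₀, hC1, coeff_sub, coeff_X_add_one_pow, Nat.choose_self, Nat.cast_one,
      coeff_C_mul, coeff_X_pow, if_true, mul_one, coeff_C,
      if_neg (by omega : ¬ f + 2 = 0), coeff_zero, sub_zero] at this
    exact hc1 (by linear_combination -this)
  -- derivative computations
  have hderiv : derivative P₀ = C ((f + 2 : ℕ) : F) * G := by
    rw [hP₀, hGdef]
    simp only [derivative_sub, derivative_pow, derivative_add, derivative_X, derivative_C,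
      derivative_mul, derivative_X_pow, derivative_one]
    push_cast
    ring
  have hGderiv : derivative G = C ((f + 1 : ℕ) : F) * ((X + C 1) ^ f - C c * X ^ f) := by
    rw [hGdef]
    simp only [derivative_sub, derivative_pow, derivative_add, derivative_X, derivative_C,
      derivative_mul, derivative_X_pow]
    push_cast
    ring
  have hGroot : G.IsRoot x₀ := by
    simp only [hGdef, IsRoot, eval_sub, eval_pow, eval_add, eval_X, eval_C, eval_mul]
    rw [hx₀, sub_self]
  have hstep : (x₀ + 1) ^ f ≠ c * x₀ ^ f := by
    intro h
    have h2 : c * x₀ ^ f * x₀ = c * x₀ ^ f * (x₀ + 1) := by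
      calc c * x₀ ^ f * x₀ = c * x₀ ^ (f + 1) := by ring
        _ = (x₀ + 1) ^ (f + 1) := hx₀.symm
        _ = (x₀ + 1) ^ f * (x₀ + 1) := by ring
        _ = c * x₀ ^ f * (x₀ + 1) := by rw [h]
    have := mul_left_cancel₀ (mul_ne_zero hc0 (pow_ne_zero f hx0)) h2
    exact one_ne_zero (by linear_combination -this)
  have hGdroot : ¬ (derivative G).IsRoot x₀ := by
    rw [hGderiv]
    simp only [IsRoot, eval_mul, eval_C, eval_sub, eval_pow, eval_add, eval_X]
    exact mul_ne_zero hfF (sub_ne_zero_of_ne hstep)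
  have hGmult : rootMultiplicity x₀ G = 1 := by
    refine le_antisymm ?_ ((rootMultiplicity_pos hGne).mpr hGroot)
    by_contra h
    exact hGdroot (((one_lt_rootMultiplicity_iff_isRoot hGne).mp (by omega)).2)
  have hDne : derivative P₀ ≠ 0 := by
    rw [hderiv]; exact mul_ne_zero (by rwa [Ne, C_eq_zero]) hGne
  have hDmult : rootMultiplicity x₀ (derivative P₀) = 1 := by
    rw [hderiv, rootMultiplicity_mul (by rw [← hderiv]; exact hDne), rootMultiplicity_C,
      hGmult]
  -- the key identity for roots of G
  have hid : ∀ z : F, (z + 1) ^ (f + 1) = c * z ^ (f + 1) →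
      (z + 1) ^ (f + 2) - c * z ^ (f + 2) = c * z ^ (f + 1) := by
    intro z hz
    have : (z + 1) ^ (f + 2) = (z + 1) ^ (f + 1) * (z + 1) := by ring
    rw [this, hz]
    ring
  have hProot : P₀.IsRoot x₀ := by
    simp only [hP₀, IsRoot, eval_sub, eval_pow, eval_add, eval_X, eval_C, eval_mul, ht₀]
    ring
  have hPDroot : (derivative P₀).IsRoot x₀ := by
    rw [hderiv]
    simp only [IsRoot, eval_mul, eval_C]
    rw [hGroot, mul_zero]
  have hmult2 : rootMultiplicity x₀ P₀ = 2 := by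
    have hle : rootMultiplicity x₀ P₀ - 1 ≤ 1 :=
      le_trans (rootMultiplicity_sub_one_le_derivative_rootMultiplicity_of_ne_zero P₀ x₀ hDne)
        (le_of_eq hDmult)
    have hlt : 1 < rootMultiplicity x₀ P₀ :=
      (one_lt_rootMultiplicity_iff_isRoot hP0ne).mpr ⟨hProot, hPDroot⟩
    omega
  have hsimple : ∀ y : F, P₀.IsRoot y → y ≠ x₀ → rootMultiplicity y P₀ = 1 := by
    intro y hy hne
    refine le_antisymm ?_ ((rootMultiplicity_pos hP0ne).mpr hy)
    by_contra h
    have h2 : 1 < rootMultiplicity y P₀ := by omega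
    have hD := ((one_lt_rootMultiplicity_iff_isRoot hP0ne).mp h2).2
    rw [hderiv] at hD
    simp only [IsRoot, eval_mul, eval_C, hGdef, eval_sub, eval_pow, eval_add, eval_X] at hD
    have hy1 : (y + 1) ^ (f + 1) = c * y ^ (f + 1) := by
      rcases mul_eq_zero.mp hD with h' | h'
      · exact absurd h' hdF
      · linear_combination h'
    have ht : (y + 1) ^ (f + 2) - c * y ^ (f + 2) = t₀ := by
      have := hy
      simp only [hP₀, IsRoot, eval_sub, eval_pow, eval_add, eval_X, eval_C, eval_mul] at this
      linear_combination this
    have h3 : c * y ^ (f + 1) = c * x₀ ^ (f + 1) := by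
      rw [← hid y hy1, ht, ht₀, ← hid x₀ hx₀]
    exact hne (hkey y hy1 (mul_left_cancel₀ hc0 h3))
  refine ⟨hmult2, hsimple, ?_⟩
  -- counting distinct roots
  have hdegle : P₀.natDegree ≤ f + 2 := by
    rw [hP₀]
    refine le_trans (natDegree_sub_le _ _) (max_le (le_trans (natDegree_sub_le _ _) ?_) ?_)
    · refine max_le ?_ ?_
      · calc ((X + C 1 : F[X]) ^ (f + 2)).natDegree ≤ (f + 2) * (X + C 1 : F[X]).natDegree :=
          natDegree_pow_le
        _ ≤ f + 2 := by rw [natDegree_X_add_C]; omega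
      · exact le_trans (natDegree_mul_le) (by simp [natDegree_X_pow])
    · simp
  have hdegge : f + 2 ≤ P₀.natDegree := by
    apply le_natDegree_of_ne_zero
    rw [hP₀]
    simp only [hC1, coeff_sub, coeff_X_add_one_pow, Nat.choose_self, Nat.cast_one,
      coeff_C_mul, coeff_X_pow, if_true, mul_one, coeff_C,
      if_neg (by omega : ¬ f + 2 = 0), sub_zero]
    exact sub_ne_zero_of_ne (Ne.symm hc1)
  have hdeg : P₀.natDegree = f + 2 := le_antisymm hdegle hdegge
  have hcard : Multiset.card P₀.roots = f + 2 := by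
    rw [← hdeg]
    exact splits_iff_card_roots.mp (IsAlgClosed.splits P₀)
  have hsetT : {y : F | P₀.IsRoot y} = ↑P₀.roots.toFinset := by
    ext y
    simp [Multiset.mem_toFinset, mem_roots hP0ne]
  rw [hsetT, Set.ncard_coe_finset]
  set T := P₀.roots.toFinset with hT
  have hx₀T : x₀ ∈ T := by
    rw [hT, Multiset.mem_toFinset, mem_roots hP0ne]
    exact hProot
  have hsum : ∑ y ∈ T, P₀.roots.count y = f + 2 := by
    rw [Multiset.toFinset_sum_count_eq, hcard]
  have hsum2 : ∑ y ∈ T, P₀.roots.count y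
      = P₀.roots.count x₀ + ∑ y ∈ T.erase x₀, P₀.roots.count y :=
    (Finset.add_sum_erase T _ hx₀T).symm
  have hcx₀ : P₀.roots.count x₀ = 2 := by rw [count_roots, hmult2]
  have herase : ∑ y ∈ T.erase x₀, P₀.roots.count y = T.card - 1 := by
    rw [Finset.sum_congr rfl (fun y hy => ?_), Finset.sum_const, smul_eq_mul, mul_one,
      Finset.card_erase_of_mem hx₀T]
    rw [count_roots]
    obtain ⟨hyne, hyT⟩ := Finset.mem_erase.mp hy
    exact hsimple y ((mem_roots hP0ne).mp (Multiset.mem_toFinset.mp hyT)) hyne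
  have hTpos : 1 ≤ T.card := Finset.card_pos.mpr ⟨x₀, hx₀T⟩
  omega
end
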